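/- arXiv:1311.6423 — 4 statements merged into one kernel-verified Lean document; each statement's English description precedes it below -/
import Mathlib

section
/- Let X denote the number of rainbow perfect matchings in K^{(n)}_{n,k} with random n-coloring, k ≥ 2 fixed. Then E[X^2] ≤ (1+o(1)) · E[X]^2 as n → ∞. -/
open Filter

/-- `M` is a perfect matching of the complete `k`-partite `k`-uniform hypergraph with
parts `Fin n`. -/
def IsPerfectMatching (n k : ℕ) (M : Finset (Fin k → Fin n)) : Prop :=
  ∀ (i : Fin k) (v : Fin n), ∃! e, e ∈ M ∧ e i = v

/-- The number of rainbow perfect matchings of `K_{n,k}` under the edge-coloring `ι`. -/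
noncomputable def rainbowCount (n k : ℕ) (ι : (Fin k → Fin n) → Fin n) : ℕ :=
  Nat.card {M : Finset (Fin k → Fin n) //
    IsPerfectMatching n k M ∧ Set.InjOn ι (M : Set (Fin k → Fin n))}

open Finset

open scoped Classical in
noncomputable def PMs (n k : ℕ) : Finset (Finset (Fin k → Fin n)) :=
  univ.filter (IsPerfectMatching n k)

lemma mem_PMs {n k : ℕ} {M : Finset (Fin k → Fin n)} :
    M ∈ PMs n k ↔ IsPerfectMatching n k M := by
  classical
  simp [PMs]

variable {n k : ℕ} {M M' : Finset (Fin k → Fin n)}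

lemma pm_unique (hM : IsPerfectMatching n k M) {e f : Fin k → Fin n}
    (he : e ∈ M) (hf : f ∈ M) (i : Fin k) (h : e i = f i) : e = f := by
  obtain ⟨g, -, hu⟩ := hM i (f i)
  rw [hu e ⟨he, h⟩, hu f ⟨hf, rfl⟩]

/-- the unique edge of `M` whose `i`-th coordinate is `v` -/
noncomputable def pmEdge (hM : IsPerfectMatching n k M) (i : Fin k) (v : Fin n) :
    Fin k → Fin n :=
  Finset.choose (fun e => e i = v) M (hM i v)

lemma pmEdge_mem (hM : IsPerfectMatching n k M) (i : Fin k) (v : Fin n) :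
    pmEdge hM i v ∈ M := by
  unfold pmEdge
  exact (Finset.choose_spec (fun e => e i = v) M (hM i v)).1

lemma pmEdge_app (hM : IsPerfectMatching n k M) (i : Fin k) (v : Fin n) :
    pmEdge hM i v i = v := by
  unfold pmEdge
  exact (Finset.choose_spec (fun e => e i = v) M (hM i v)).2

lemma pmEdge_eq (hM : IsPerfectMatching n k M) (i : Fin k) {e : Fin k → Fin n}
    (he : e ∈ M) : pmEdge hM i (e i) = e :=
  pm_unique hM (pmEdge_mem hM i (e i)) he i (pmEdge_app hM i (e i))

section count

lemma pm_lower_bound (hk : 2 ≤ k) :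
    (n.factorial) ^ (k - 1) ≤ (PMs n k).card := by
  classical
  set i0 : Fin k := ⟨0, by omega⟩
  set J := {i : Fin k // i ≠ i0}
  -- the map from tuples of permutations to matchings
  set F : (J → Equiv.Perm (Fin n)) → Finset (Fin k → Fin n) := fun P =>
    univ.image (fun v : Fin n => fun i : Fin k => if h : i = i0 then v else P ⟨i, h⟩ v)
    with hF
  have hFmem : ∀ P, F P ∈ PMs n k := by
    intro P
    rw [mem_PMs]
    intro i v
    by_cases h : i = i0
    · subst h
      refine ⟨fun j => if h : j = i0 then v else P ⟨j, h⟩ v, ⟨mem_image_of_mem _ (mem_univ v), by simp⟩, ?_⟩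
      rintro e ⟨he, hei⟩
      obtain ⟨w, -, rfl⟩ := mem_image.1 he
      simp only [dif_pos rfl] at hei
      subst hei
      rfl
    · set w := (P ⟨i, h⟩).symm v with hw
      refine ⟨fun j => if hj : j = i0 then w else P ⟨j, hj⟩ w,
        ⟨mem_image_of_mem _ (mem_univ w), by simp [h, hw]⟩, ?_⟩
      rintro e ⟨he, hei⟩
      obtain ⟨u, -, rfl⟩ := mem_image.1 he
      simp only [dif_neg h] at hei
      have : u = w := by
        rw [hw]
        exact ((Equiv.symm_apply_eq _).2 hei.symm).symm
      subst this
      rfl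
  have hFinj : Function.Injective F := by
    intro P Q hPQ
    funext i
    apply Equiv.ext
    intro v
    have h1 : (fun j : Fin k => if h : j = i0 then v else P ⟨j, h⟩ v) ∈ F Q := by
      rw [← hPQ]; exact mem_image_of_mem _ (mem_univ v)
    obtain ⟨w, -, hw⟩ := mem_image.1 h1
    have hv : w = v := by
      have := congrFun hw i0
      simpa using this
    subst hv
    have h2 := congrFun hw i.1
    simp only [dif_neg i.2] at h2
    exact h2.symm
  have := Finset.card_le_card_of_injOn (s := (univ : Finset (J → Equiv.Perm (Fin n))))
    (t := PMs n k) F (fun P _ => hFmem P) (fun a _ b _ h => hFinj h)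
  rw [card_univ] at this
  refine le_trans (le_of_eq ?_) this
  rw [Fintype.card_fun, Fintype.card_perm, Fintype.card_fin]
  congr 1
  rw [Fintype.card_subtype_compl, Fintype.card_fin]
  simp

end count

lemma pm_card (hk : 1 ≤ k) (hM : IsPerfectMatching n k M) : M.card = n := by
  have i0 : Fin k := ⟨0, hk⟩
  have himg : M.image (fun e => e i0) = univ := by
    apply eq_univ_of_forall
    intro v
    obtain ⟨e, ⟨he, hev⟩, -⟩ := hM i0 v
    exact mem_image.2 ⟨e, he, hev⟩
  have hinj : Set.InjOn (fun e => e i0) (M : Set (Fin k → Fin n)) := by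
    intro a ha b hb hab
    exact pm_unique hM ha hb i0 hab
  have := Finset.card_image_of_injOn hinj
  rw [himg, card_univ, Fintype.card_fin] at this
  omega

lemma count_superset (hk : 2 ≤ k) {T M0 : Finset (Fin k → Fin n)} (hT : T ⊆ M0)
    (hM0 : IsPerfectMatching n k M0) :
    ((PMs n k).filter (fun M' => T ⊆ M')).card ≤ ((n - T.card).factorial) ^ (k - 1) := by
  classical
  set i0 : Fin k := ⟨0, by omega⟩ with hi0
  set t := T.card with ht
  have hTinj : ∀ i : Fin k, Set.InjOn (fun e : Fin k → Fin n => e i) (T : Set _) := by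
    intro i a ha b hb hab
    exact pm_unique hM0 (hT ha) (hT hb) i hab
  have hTcard : ∀ i : Fin k, (T.image (fun e => e i)).card = t :=
    fun i => Finset.card_image_of_injOn (hTinj i)
  set A : Fin k → Finset (Fin n) := fun i => T.image (fun e => e i) with hA
  have hAc : ∀ i, Fintype.card {v // v ∉ A i} = n - t := by
    intro i
    rw [Fintype.card_subtype_compl, Fintype.card_fin, Fintype.card_coe, hTcard]
  -- subtype of matchings containing T
  set S := {M' // M' ∈ (PMs n k).filter (fun M' => T ⊆ M')} with hS
  have hmem : ∀ M' : S, IsPerfectMatching n k M'.1 ∧ T ⊆ M'.1 := by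
    intro M'
    have := mem_filter.1 M'.2
    exact ⟨mem_PMs.1 this.1, this.2⟩
  -- avoidance
  have havoid : ∀ (M' : S) (i : Fin k) (v : Fin n), v ∉ A i0 →
      pmEdge (hmem M').1 i0 v i ∉ A i := by
    intro M' i v hv hmemA
    obtain ⟨e, heT, hei⟩ := mem_image.1 hmemA
    have he' : e ∈ M'.1 := (hmem M').2 heT
    have : e = pmEdge (hmem M').1 i0 v := pm_unique (hmem M').1 he'
      (pmEdge_mem (hmem M').1 i0 v) i hei
    apply hv
    rw [hA]
    refine mem_image.2 ⟨e, heT, ?_⟩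
    rw [this, pmEdge_app]
  -- the injection
  set ψ : S → (∀ i : {i : Fin k // i ≠ i0}, ({v // v ∉ A i0} ↪ {w // w ∉ A i.1})) :=
    fun M' i =>
    ⟨fun v => ⟨pmEdge (hmem M').1 i0 v.1 i.1, havoid M' i.1 v.1 v.2⟩, by
      intro a b hab
      simp only [Subtype.mk.injEq] at hab
      have := pm_unique (hmem M').1 (pmEdge_mem (hmem M').1 i0 a.1)
        (pmEdge_mem (hmem M').1 i0 b.1) i.1 hab
      have h2 := congrFun this i0
      rw [pmEdge_app, pmEdge_app] at h2
      exact Subtype.ext h2⟩ with hψ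
  have hψapp : ∀ (M' : S) (i : {i : Fin k // i ≠ i0}) (v : {v // v ∉ A i0}),
      (ψ M' i v).1 = pmEdge (hmem M').1 i0 v.1 i.1 := fun _ _ _ => rfl
  have hψinj : Function.Injective ψ := by
    intro Ma Mb hab
    have hcard : ∀ M' : S, M'.1.card = n := fun M' => pm_card (by omega) (hmem M').1
    have hsub : ∀ Ma Mb : S, ψ Ma = ψ Mb → Ma.1 ⊆ Mb.1 := by
      intro Ma Mb hab e he
      by_cases hv : e i0 ∈ A i0
      · obtain ⟨eT, heT, hei⟩ := mem_image.1 hv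
        have : eT = e := pm_unique (hmem Ma).1 ((hmem Ma).2 heT) he i0 hei
        exact (hmem Mb).2 (this ▸ heT)
      · have he1 : pmEdge (hmem Ma).1 i0 (e i0) = e := pmEdge_eq (hmem Ma).1 i0 he
        have he2 : pmEdge (hmem Mb).1 i0 (e i0) = e := by
          funext i
          by_cases hi : i = i0
          · subst hi
            rw [pmEdge_app]
          · have h3 := congrArg Subtype.val
              (DFunLike.congr_fun (congrFun hab ⟨i, hi⟩) (⟨e i0, hv⟩ : {v // v ∉ A i0}))
            rw [hψapp, hψapp] at h3
            rw [← h3, he1]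
        rw [← he2]
        exact pmEdge_mem (hmem Mb).1 i0 (e i0)
    exact Subtype.ext (Finset.Subset.antisymm (hsub Ma Mb hab) (hsub Mb Ma hab.symm))
  have hle := Fintype.card_le_of_injective ψ hψinj
  rw [Fintype.card_coe] at hle
  refine hle.trans (le_of_eq ?_)
  rw [Fintype.card_pi]
  have hfac : ∀ i : {i : Fin k // i ≠ i0},
      Fintype.card ({v // v ∉ A i0} ↪ {w // w ∉ A i.1}) = (n - t).factorial := by
    intro i
    rw [Fintype.card_embedding_eq, hAc, hAc, Nat.descFactorial_self]
  rw [Finset.prod_congr rfl (fun i _ => hfac i), Finset.prod_const, card_univ]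
  congr 1
  rw [Fintype.card_subtype_compl, Fintype.card_fin]
  simp

open scoped Classical in
lemma pairs_bound (hk : 2 ≤ k) {t : ℕ} (ht1 : 1 ≤ t) (htn : t ≤ n) :
    (((PMs n k) ×ˢ (PMs n k)).filter
        (fun p => t ≤ (p.1 ∩ p.2).card)).card * t.factorial ≤ (PMs n k).card ^ 2 := by
  classical
  -- fiberwise count
  have step1 : (((PMs n k) ×ˢ (PMs n k)).filter (fun p => t ≤ (p.1 ∩ p.2).card)).card
      = ∑ M ∈ PMs n k, ((PMs n k).filter (fun M' => t ≤ (M ∩ M').card)).card := by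
    rw [Finset.card_filter, Finset.sum_product]
    exact Finset.sum_congr rfl (fun M _ => (Finset.card_filter _ _).symm)
  -- per-fiber bound
  have step2 : ∀ M ∈ PMs n k, ((PMs n k).filter (fun M' => t ≤ (M ∩ M').card)).card ≤
      n.choose t * ((n - t).factorial) ^ (k - 1) := by
    intro M hM
    have hMpm := mem_PMs.1 hM
    have hMcard : M.card = n := pm_card (by omega) hMpm
    have hcover : (PMs n k).filter (fun M' => t ≤ (M ∩ M').card) ⊆
        (M.powersetCard t).biUnion (fun T => (PMs n k).filter (fun M' => T ⊆ M')) := by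
      intro M' hM'
      rw [mem_filter] at hM'
      obtain ⟨T, hTsub, hTcard⟩ := Finset.exists_subset_card_eq hM'.2
      refine mem_biUnion.2 ⟨T, ?_, mem_filter.2 ⟨hM'.1, hTsub.trans inter_subset_right⟩⟩
      exact mem_powersetCard.2 ⟨hTsub.trans inter_subset_left, hTcard⟩
    refine (card_le_card hcover).trans ((card_biUnion_le).trans ?_)
    have hbd : ∀ T ∈ M.powersetCard t,
        ((PMs n k).filter (fun M' => T ⊆ M')).card ≤ ((n - t).factorial) ^ (k - 1) := by
      intro T hT
      rw [mem_powersetCard] at hT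
      have := count_superset hk hT.1 hMpm
      rwa [hT.2] at this
    refine (Finset.sum_le_sum hbd).trans ?_
    rw [Finset.sum_const, Finset.card_powersetCard, hMcard, smul_eq_mul]
  -- combine
  have step3 : (((PMs n k) ×ˢ (PMs n k)).filter (fun p => t ≤ (p.1 ∩ p.2).card)).card ≤
      (PMs n k).card * (n.choose t * ((n - t).factorial) ^ (k - 1)) := by
    rw [step1]
    exact (Finset.sum_le_sum step2).trans (by rw [Finset.sum_const, smul_eq_mul])
  have step4 : n.choose t * ((n - t).factorial) ^ (k - 1) * t.factorial ≤
      n.factorial ^ (k - 1) := by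
    have h1 : n.choose t * t.factorial * (n - t).factorial = n.factorial :=
      Nat.choose_mul_factorial_mul_factorial htn
    have h2 : ((n - t).factorial) ^ (k - 1) = (n - t).factorial * ((n - t).factorial) ^ (k - 2) := by
      rw [← pow_succ']
      congr 1
      omega
    calc n.choose t * ((n - t).factorial) ^ (k - 1) * t.factorial
        = (n.choose t * t.factorial * (n - t).factorial) * ((n - t).factorial) ^ (k - 2) := by
          rw [h2]; ring
      _ = n.factorial * ((n - t).factorial) ^ (k - 2) := by rw [h1]
      _ ≤ n.factorial * (n.factorial) ^ (k - 2) := by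
          exact Nat.mul_le_mul_left _ (Nat.pow_le_pow_left (Nat.factorial_le (by omega)) _)
      _ = n.factorial ^ (k - 1) := by
          rw [← pow_succ']
          congr 1
          omega
  calc (((PMs n k) ×ˢ (PMs n k)).filter (fun p => t ≤ (p.1 ∩ p.2).card)).card * t.factorial
      ≤ (PMs n k).card * (n.choose t * ((n - t).factorial) ^ (k - 1)) * t.factorial :=
        Nat.mul_le_mul_right _ step3
    _ = (PMs n k).card * (n.choose t * ((n - t).factorial) ^ (k - 1) * t.factorial) := by ring
    _ ≤ (PMs n k).card * n.factorial ^ (k - 1) := Nat.mul_le_mul_left _ step4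
    _ ≤ (PMs n k).card * (PMs n k).card := Nat.mul_le_mul_left _ (pm_lower_bound hk)
    _ = (PMs n k).card ^ 2 := (sq _).symm

section main2
variable {n k : ℕ} {M M' : Finset (Fin k → Fin n)}

/-- counting equiv for colorings injective on M -/
noncomputable def injEquiv (M : Finset (Fin k → Fin n)) :
    {ι : (Fin k → Fin n) → Fin n // Set.InjOn ι (M : Set (Fin k → Fin n))} ≃
      {f : {e // e ∈ M} → Fin n // Function.Injective f} × ({e // e ∉ M} → Fin n) where
  toFun ι := ⟨⟨fun x => ι.1 x.1, fun a b hab => Subtype.ext (ι.2 a.2 b.2 hab)⟩,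
    fun x => ι.1 x.1⟩
  invFun fh := ⟨fun e => if h : e ∈ M then fh.1.1 ⟨e, h⟩ else fh.2 ⟨e, h⟩, by
    intro a ha b hb hab
    simp only [Finset.mem_coe] at ha hb
    simp only [dif_pos ha, dif_pos hb] at hab
    exact congrArg Subtype.val (fh.1.2 hab)⟩
  left_inv ι := by
    ext e
    by_cases h : e ∈ M <;> simp [h]
  right_inv fh := by
    refine Prod.ext (Subtype.ext (funext fun x => ?_)) (funext fun x => ?_)
    · simp [x.2]
    · simp [x.2]

lemma card_injOn (hn : M.card = n) :
    Nat.card {ι : (Fin k → Fin n) → Fin n // Set.InjOn ι (M : Set (Fin k → Fin n))} =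
      n.factorial * n ^ (n ^ k - n) := by
  classical
  rw [Nat.card_eq_fintype_card, Fintype.card_congr (injEquiv M), Fintype.card_prod,
    Fintype.card_congr (Equiv.subtypeInjectiveEquivEmbedding _ _),
    Fintype.card_embedding_eq, Fintype.card_fun]
  have h1 : Fintype.card {e // e ∈ M} = n := by rw [Fintype.card_coe, hn]
  have h2 : Fintype.card {e // e ∉ M} = n ^ k - n := by
    rw [Fintype.card_subtype_compl, h1]
    congr 1
    simp [Fintype.card_fun]
  rw [h1, h2, Fintype.card_fin, Nat.descFactorial_self]


lemma card_injOn_pair (hn : M.card = n) (hn' : M'.card = n) :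
    Nat.card {ι : (Fin k → Fin n) → Fin n //
        Set.InjOn ι (M : Set (Fin k → Fin n)) ∧ Set.InjOn ι (M' : Set (Fin k → Fin n))} ≤
      n.factorial * ((n - (M ∩ M').card).factorial *
        n ^ (n ^ k - (2 * n - (M ∩ M').card))) := by
  classical
  set s := (M ∩ M').card with hs
  have hsn : s ≤ n := hn ▸ card_le_card inter_subset_left
  -- cardinalities
  have hMM' : (M \ M').card = n - s := by
    have := card_inter_add_card_sdiff M M'
    omega
  have hM'M : (M' \ M).card = n - s := by
    have := card_inter_add_card_sdiff M' M
    rw [inter_comm] at this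
    omega
  have hU : (M ∪ M').card = 2 * n - s := by
    have := card_union_add_card_inter M M'
    omega
  have hcM : Fintype.card {e // e ∈ M} = n := by rw [Fintype.card_coe, hn]
  -- the target type
  have key : ∀ ι : {ι : (Fin k → Fin n) → Fin n //
      Set.InjOn ι (M : Set (Fin k → Fin n)) ∧ Set.InjOn ι (M' : Set (Fin k → Fin n))},
      Function.Bijective (fun x : {e // e ∈ M} => ι.1 x.1) := by
    intro ι
    rw [Fintype.bijective_iff_injective_and_card]
    exact ⟨fun a b hab => Subtype.ext (ι.2.1 a.2 b.2 hab), by simp [hcM]⟩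
  let E : {ι : (Fin k → Fin n) → Fin n //
      Set.InjOn ι (M : Set (Fin k → Fin n)) ∧ Set.InjOn ι (M' : Set (Fin k → Fin n))} →
      ({e // e ∈ M} ≃ Fin n) := fun ι => Equiv.ofBijective _ (key ι)
  have hE : ∀ ι x, E ι x = ι.1 x.1 := fun _ _ => rfl
  -- the G component
  have hGmem : ∀ ι x (hx : x ∈ M' \ M), ((E ι).symm (ι.1 x)).1 ∈ M \ M' := by
    intro ι x hx
    rw [Finset.mem_sdiff] at hx
    obtain ⟨hx1, hx2⟩ := hx
    set y := (E ι).symm (ι.1 x) with hy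
    have hyx : ι.1 y.1 = ι.1 x := by
      rw [← hE ι y, hy, Equiv.apply_symm_apply]
    rw [Finset.mem_sdiff]
    refine ⟨y.2, fun hy' => hx2 ?_⟩
    have h := ι.2.2 hy' hx1 hyx
    exact h ▸ y.2
  -- the injection
  let Φ : {ι : (Fin k → Fin n) → Fin n //
      Set.InjOn ι (M : Set (Fin k → Fin n)) ∧ Set.InjOn ι (M' : Set (Fin k → Fin n))} →
      ({e // e ∈ M} ≃ Fin n) × ({e // e ∈ M' \ M} ↪ {e // e ∈ M \ M'}) ×
        ({e // e ∉ M ∪ M'} → Fin n) := fun ι =>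
    ⟨E ι, ⟨fun x => ⟨((E ι).symm (ι.1 x.1)).1, hGmem ι x.1 x.2⟩, by
      intro a b hab
      simp only [Subtype.mk.injEq] at hab
      have : (E ι).symm (ι.1 a.1) = (E ι).symm (ι.1 b.1) := Subtype.ext hab
      have h2 : ι.1 a.1 = ι.1 b.1 := by
        have := congrArg (E ι) this
        simpa [Equiv.apply_symm_apply] using this
      exact Subtype.ext (ι.2.2 (mem_coe.2 (mem_sdiff.1 a.2).1) (mem_coe.2 (mem_sdiff.1 b.2).1) h2)⟩,
      fun x => ι.1 x.1⟩
  have hΦ : Function.Injective Φ := by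
    intro ι ι' h
    have h1 := congrArg Prod.fst h
    have h2 := congrArg (fun p => p.2.1) h
    have h3 := congrArg (fun p => p.2.2) h
    simp only [Φ] at h1 h2 h3
    apply Subtype.ext
    funext x
    have hA : ∀ (w : {e // e ∈ M}), ι.1 w.1 = ι'.1 w.1 := fun w => by
      rw [← hE ι w, ← hE ι' w, h1]
    by_cases hx : x ∈ M
    · exact hA ⟨x, hx⟩
    · by_cases hx' : x ∈ M'
      · have hxs : x ∈ M' \ M := Finset.mem_sdiff.2 ⟨hx', hx⟩
        have hg0 := DFunLike.congr_fun h2 (⟨x, hxs⟩ : {e // e ∈ M' \ M})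
        have hg : ((E ι).symm (ι.1 x)).1 = ((E ι').symm (ι'.1 x)).1 := by
          have h := congrArg Subtype.val hg0; exact h
        have B : ι.1 (((E ι).symm (ι.1 x)).1) = ι.1 x := by
          rw [← hE]; exact Equiv.apply_symm_apply _ _
        have B' : ι'.1 (((E ι').symm (ι'.1 x)).1) = ι'.1 x := by
          rw [← hE]; exact Equiv.apply_symm_apply _ _
        calc ι.1 x = ι.1 (((E ι).symm (ι.1 x)).1) := B.symm
          _ = ι'.1 (((E ι).symm (ι.1 x)).1) := hA _
          _ = ι'.1 (((E ι').symm (ι'.1 x)).1) := by rw [hg]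
          _ = ι'.1 x := B'
      · have hxu : x ∉ M ∪ M' := by simp [hx, hx']
        exact congrFun h3 ⟨x, hxu⟩
  -- count the target
  have := Nat.card_le_card_of_injective Φ hΦ
  refine this.trans_eq ?_
  rw [Nat.card_eq_fintype_card, Fintype.card_prod, Fintype.card_prod,
    Fintype.card_equiv (Fintype.equivFinOfCardEq hcM),
    Fintype.card_embedding_eq, Fintype.card_fun, hcM, Fintype.card_fin]
  have c1 : Fintype.card {e // e ∈ M \ M'} = n - s := by rw [Fintype.card_coe, hMM']
  have c2 : Fintype.card {e // e ∈ M' \ M} = n - s := by rw [Fintype.card_coe, hM'M]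
  have c3 : Fintype.card {e // e ∉ M ∪ M'} = n ^ k - (2 * n - s) := by
    rw [Fintype.card_subtype_compl, Fintype.card_coe, hU]
    congr 1
    simp [Fintype.card_fun]
  rw [c1, c2, c3, Nat.descFactorial_self]


end main2

def Hw (n s : ℕ) : ℕ := (n - s).factorial * n ^ s
def Dw (n t : ℕ) : ℕ := (t - 1) * n ^ (t - 1) * (n - t).factorial

lemma Hw_eq (n : ℕ) : ∀ {s : ℕ}, s ≤ n → Hw n s = n.factorial + ∑ t ∈ Icc 1 s, Dw n t := by
  intro s
  induction s with
  | zero => simp [Hw]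
  | succ s ih =>
    intro hs
    have key : Hw n (s + 1) = Hw n s + Dw n (s + 1) := by
      have hfac : (n - s).factorial = (n - s) * (n - (s + 1)).factorial := by
        have h1 : n - s = (n - (s + 1)) + 1 := by omega
        rw [h1, Nat.factorial_succ, ← h1]
      show (n - (s + 1)).factorial * n ^ (s + 1) =
        (n - s).factorial * n ^ s + (s + 1 - 1) * n ^ (s + 1 - 1) * (n - (s + 1)).factorial
      have h3 : s + 1 - 1 = s := rfl
      rw [h3, hfac, pow_succ]
      have h4 : n - s + s = n := by omega
      calc (n - (s + 1)).factorial * (n ^ s * n)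
          = ((n - s) + s) * ((n - (s + 1)).factorial * n ^ s) := by rw [h4]; ring
        _ = (n - s) * (n - (s + 1)).factorial * n ^ s
            + s * n ^ s * (n - (s + 1)).factorial := by ring
    rw [key, ih (by omega), Finset.sum_Icc_succ_top (by omega : 1 ≤ s + 1)]
    ring

lemma pow_mul_fac_le (n : ℕ) : ∀ {t : ℕ}, 2 * t ≤ n + 2 → n ^ t * (n - t).factorial ≤ 2 ^ t * n.factorial := by
  intro t
  induction t with
  | zero => simp
  | succ t ih =>
    intro ht
    rcases Nat.eq_zero_or_pos n with hn | hn
    · subst hn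
      simp [Nat.pow_succ]
    have htn : t < n := by omega
    have hpos : 0 < n - t := by omega
    apply Nat.le_of_mul_le_mul_right (c := n - t) _ hpos
    have hfac : (n - t).factorial = (n - t) * (n - (t + 1)).factorial := by
      have h1 : n - t = (n - (t + 1)) + 1 := by omega
      rw [h1, Nat.factorial_succ, ← h1]
    calc n ^ (t + 1) * (n - (t + 1)).factorial * (n - t)
        = (n ^ t * ((n - t) * (n - (t + 1)).factorial)) * n := by ring
      _ = (n ^ t * (n - t).factorial) * n := by rw [hfac]
      _ ≤ (2 ^ t * n.factorial) * n := Nat.mul_le_mul_right _ (ih (by omega))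
      _ ≤ (2 ^ t * n.factorial) * (2 * (n - t)) := Nat.mul_le_mul_left _ (by omega)
      _ = 2 ^ (t + 1) * n.factorial * (n - t) := by ring

lemma four_pow_le_fac (j : ℕ) : 4 ^ j ≤ 16 * j.factorial := by
  induction j with
  | zero => simp
  | succ j ih =>
    rcases Nat.lt_or_ge j 3 with h | h
    · interval_cases j <;> simp [Nat.factorial]
    · calc 4 ^ (j + 1) = 4 * 4 ^ j := by ring
        _ ≤ 4 * (16 * j.factorial) := Nat.mul_le_mul_left _ ih
        _ ≤ (j + 1) * (16 * j.factorial) := Nat.mul_le_mul_right _ (by omega)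
        _ = 16 * ((j + 1) * j.factorial) := by ring
        _ = 16 * (j + 1).factorial := by rw [Nat.factorial_succ]

lemma pow_self_le (n : ℕ) : n ^ n ≤ 4 ^ n * n.factorial := by
  have h1 : n.factorial * n ^ n ≤ n.factorial * (n + 1) ^ n :=
    Nat.mul_le_mul_left _ (Nat.pow_le_pow_left (by omega) _)
  have h2 : n.factorial * (n + 1) ^ n ≤ (n + n).factorial := Nat.factorial_mul_pow_le_factorial
  have h3 : (n + n).factorial = (n + n).choose n * n.factorial * n.factorial := by
    rw [← Nat.choose_mul_factorial_mul_factorial (by omega : n ≤ n + n)]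
    congr 2
    omega
  have h4 : (n + n).choose n ≤ 4 ^ n := by
    have := Finset.single_le_sum (f := fun i => (n + n).choose i)
      (fun i _ => Nat.zero_le _) (Finset.mem_range.2 (by omega : n < n + n + 1))
    rw [Nat.sum_range_choose] at this
    calc (n + n).choose n ≤ 2 ^ (n + n) := this
      _ = 4 ^ n := by rw [show n + n = 2 * n by ring, pow_mul]; norm_num
  have := h1.trans (h2.trans_eq h3)
  have h5 : n.factorial * n ^ n ≤ n.factorial * (4 ^ n * n.factorial) := by
    calc n.factorial * n ^ n ≤ (n + n).choose n * n.factorial * n.factorial := this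
      _ ≤ 4 ^ n * n.factorial * n.factorial := Nat.mul_le_mul_right _ (Nat.mul_le_mul_right _ h4)
      _ = n.factorial * (4 ^ n * n.factorial) := by ring
  exact Nat.le_of_mul_le_mul_left h5 n.factorial_pos

lemma small_nat {n t : ℕ} (ht : 1 ≤ t) (htn : 2 * t ≤ n) :
    Dw n t * (n * 2 ^ (t - 1)) ≤ 32 * (t.factorial * n.factorial) := by
  have hb : n ^ (t - 1) * (n - (t - 1)).factorial ≤ 2 ^ (t - 1) * n.factorial :=
    pow_mul_fac_le n (by omega)
  have hfac : (n - (t - 1)).factorial = (n - t + 1) * (n - t).factorial := by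
    have h1 : n - (t - 1) = (n - t) + 1 := by omega
    rw [h1, Nat.factorial_succ]
  rw [hfac] at hb
  have hn2 : n ≤ 2 * (n - t + 1) := by omega
  calc Dw n t * (n * 2 ^ (t - 1))
      = (t - 1) * 2 ^ (t - 1) * (n ^ (t - 1) * (n - t).factorial * n) := by
        unfold Dw; ring
    _ ≤ (t - 1) * 2 ^ (t - 1) * (n ^ (t - 1) * (n - t).factorial * (2 * (n - t + 1))) := by
        exact Nat.mul_le_mul_left _ (Nat.mul_le_mul_left _ hn2)
    _ = 2 * ((t - 1) * 2 ^ (t - 1)) * (n ^ (t - 1) * ((n - t + 1) * (n - t).factorial)) := by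
        ring
    _ ≤ 2 * ((t - 1) * 2 ^ (t - 1)) * (2 ^ (t - 1) * n.factorial) := by
        exact Nat.mul_le_mul_left _ hb
    _ = 2 * (t - 1) * (2 ^ (t - 1) * 2 ^ (t - 1)) * n.factorial := by ring
    _ = 2 * (t - 1) * 4 ^ (t - 1) * n.factorial := by
        congr 2
        rw [← mul_pow]
        norm_num
    _ ≤ 2 * (t - 1) * (16 * (t - 1).factorial) * n.factorial := by
        exact Nat.mul_le_mul_right _ (Nat.mul_le_mul_left _ (four_pow_le_fac _))
    _ = 32 * ((t - 1) * (t - 1).factorial) * n.factorial := by ring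
    _ ≤ 32 * (t * (t - 1).factorial) * n.factorial := by
        gcongr
        omega
    _ = 32 * (t.factorial * n.factorial) := by
        rw [Nat.mul_factorial_pred (by omega)]
        ring

lemma tail_nat {n t : ℕ} (ht : 1 ≤ t) (htn : t ≤ n) :
    Dw n t ≤ 4 ^ n * n.factorial := by
  have h1 : Dw n t ≤ n ^ n := by
    calc Dw n t = (t - 1) * n ^ (t - 1) * (n - t).factorial := rfl
      _ ≤ n * n ^ (t - 1) * (n - t) ^ (n - t) :=
          Nat.mul_le_mul (Nat.mul_le_mul_right _ (by omega)) (Nat.factorial_le_pow _)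
      _ ≤ n * n ^ (t - 1) * n ^ (n - t) :=
          Nat.mul_le_mul_left _ (Nat.pow_le_pow_left (by omega) _)
      _ = n ^ (1 + (t - 1) + (n - t)) := by rw [pow_add, pow_add, pow_one]
      _ = n ^ n := by congr 1; omega
  exact h1.trans (pow_self_le n)

noncomputable def fseq (n : ℕ) : ℝ :=
  ∑ t ∈ Icc 1 n, (Dw n t : ℝ) / (t.factorial * n.factorial)

lemma fseq_nonneg (n : ℕ) : 0 ≤ fseq n := by
  apply Finset.sum_nonneg
  intro t _
  positivity

lemma half_geom (m : ℕ) : ∑ t ∈ Icc 1 m, ((1 : ℝ) / 2) ^ (t - 1) ≤ 2 := by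
  have key : ∀ m : ℕ, ∑ t ∈ Icc 1 m, ((1 : ℝ) / 2) ^ (t - 1) = ∑ j ∈ range m, ((1 : ℝ) / 2) ^ j := by
    intro m
    induction m with
    | zero => simp
    | succ m ih =>
      rw [Finset.sum_Icc_succ_top (by omega), ih, Finset.sum_range_succ]
      simp
  rw [key]
  exact sum_geometric_two_le m

lemma fseq_le {n : ℕ} (hn : 1 ≤ n) :
    fseq n ≤ 64 / n + 8 * 64 ^ (n / 2) / ((n / 2).factorial) := by
  have hterm : ∀ t ∈ Icc 1 n, (Dw n t : ℝ) / (t.factorial * n.factorial) ≤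
      (32 / n) * ((1 : ℝ) / 2) ^ (t - 1) + (4 : ℝ) ^ n / ((n / 2 + 1).factorial) := by
    intro t htm
    rw [mem_Icc] at htm
    rcases le_or_gt (2 * t) n with hsm | hlg
    · -- small regime
      have h := small_nat htm.1 hsm
      have hle : (Dw n t : ℝ) / (t.factorial * n.factorial) ≤ 32 / (n * 2 ^ (t - 1)) := by
        rw [div_le_div_iff₀ (by positivity) (by positivity)]
        calc (Dw n t : ℝ) * (n * 2 ^ (t - 1)) = ((Dw n t * (n * 2 ^ (t - 1)) : ℕ) : ℝ) := by
              push_cast; ring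
          _ ≤ ((32 * (t.factorial * n.factorial) : ℕ) : ℝ) := by exact_mod_cast h
          _ = 32 * (t.factorial * n.factorial) := by push_cast; ring
      refine hle.trans (le_trans (le_of_eq ?_) (le_add_of_nonneg_right (by positivity)))
      rw [one_div, inv_pow, ← div_eq_mul_inv, div_div]
    · -- tail regime
      have h := tail_nat htm.1 htm.2
      have ht2 : (n / 2 + 1) ≤ t := by omega
      have hle : (Dw n t : ℝ) / (t.factorial * n.factorial) ≤
          ((4 : ℝ) ^ n * n.factorial) / ((n / 2 + 1).factorial * n.factorial) := by
        apply div_le_div₀ (by positivity) _ (by positivity)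
        · exact mul_le_mul_of_nonneg_right
            (by exact_mod_cast Nat.factorial_le ht2) (by positivity)
        · exact_mod_cast h
      refine le_trans hle (le_trans (le_of_eq ?_) (le_add_of_nonneg_left (by positivity)))
      rw [mul_div_mul_right _ _ (by positivity : ((n.factorial : ℝ)) ≠ 0)]
  refine le_trans (Finset.sum_le_sum hterm) ?_
  rw [Finset.sum_add_distrib]
  have h1 : ∑ t ∈ Icc 1 n, (32 / n) * ((1 : ℝ) / 2) ^ (t - 1) ≤ 64 / n := by
    rw [← Finset.mul_sum]
    calc (32 / n) * ∑ t ∈ Icc 1 n, ((1 : ℝ) / 2) ^ (t - 1) ≤ (32 / n) * 2 :=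
          mul_le_mul_of_nonneg_left (half_geom n) (by positivity)
      _ = 64 / n := by ring
  have h2 : ∑ _t ∈ Icc 1 n, (4 : ℝ) ^ n / ((n / 2 + 1).factorial) ≤
      8 * 64 ^ (n / 2) / ((n / 2).factorial) := by
    rw [Finset.sum_const, Nat.card_Icc]
    have hc : (n + 1 - 1) = n := by omega
    rw [hc, nsmul_eq_mul]
    have hnum : (n : ℝ) * 4 ^ n ≤ 8 * 64 ^ (n / 2) := by
      have hn2 : (n : ℝ) ≤ 2 ^ n := by exact_mod_cast (Nat.lt_two_pow_self (n := n)).le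
      have : (n : ℝ) * 4 ^ n ≤ 2 ^ n * 4 ^ n :=
        mul_le_mul_of_nonneg_right hn2 (by positivity)
      refine this.trans ?_
      have h8 : (2 : ℝ) ^ n * 4 ^ n = 8 ^ n := by
        rw [← mul_pow]; norm_num
      rw [h8]
      have hsplit : n = 2 * (n / 2) + n % 2 := by omega
      calc (8 : ℝ) ^ n = 8 ^ (2 * (n / 2)) * 8 ^ (n % 2) := by
            rw [← pow_add]; congr 1
        _ ≤ 8 ^ (2 * (n / 2)) * 8 := by
            apply mul_le_mul_of_nonneg_left _ (by positivity)
            have : n % 2 ≤ 1 := by omega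
            calc (8 : ℝ) ^ (n % 2) ≤ 8 ^ 1 := by
                  apply pow_le_pow_right₀ (by norm_num) this
              _ = 8 := by norm_num
        _ = 8 * 64 ^ (n / 2) := by
            rw [pow_mul]
            norm_num [mul_comm]
    have hfact : ((n / 2).factorial : ℝ) ≤ ((n / 2 + 1).factorial : ℝ) := by
      exact_mod_cast Nat.factorial_le (by omega)
    calc (n : ℝ) * (4 ^ n / ((n / 2 + 1).factorial)) = (n : ℝ) * 4 ^ n / ((n / 2 + 1).factorial) := by
          ring
      _ ≤ 8 * 64 ^ (n / 2) / ((n / 2).factorial) := by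
          apply div_le_div₀ (by positivity) hnum (by positivity) hfact
  exact add_le_add h1 h2

lemma fseq_tendsto : Filter.Tendsto fseq Filter.atTop (nhds 0) := by
  apply squeeze_zero' (Filter.Eventually.of_forall fseq_nonneg)
  · refine Filter.eventually_atTop.2 ⟨1, fun n hn => fseq_le hn⟩
  · have h1 : Filter.Tendsto (fun n : ℕ => (64 : ℝ) / n) Filter.atTop (nhds 0) :=
      tendsto_const_div_atTop_nhds_zero_nat 64
    have h2 : Filter.Tendsto (fun m : ℕ => (8 : ℝ) * 64 ^ m / m.factorial)
        Filter.atTop (nhds 0) := by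
      have := FloorSemiring.tendsto_pow_div_factorial_atTop (64 : ℝ)
      have h8 := this.const_mul (8 : ℝ)
      simp only [mul_zero] at h8
      convert h8 using 2 with m
      ring
    have hcomp : Filter.Tendsto (fun n : ℕ => n / 2) Filter.atTop Filter.atTop :=
      Filter.tendsto_atTop_atTop.2 (fun b => ⟨2 * b, fun a ha => by omega⟩)
    have h3 := (h2.comp hcomp)
    have := h1.add h3
    simpa using this


lemma card_filter_univ {α : Type*} [Fintype α] (p : α → Prop) [DecidablePred p] :
    (univ.filter p).card = Nat.card {x // p x} := by
  rw [Nat.card_eq_fintype_card, Fintype.card_subtype]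

/-- Let `X` be the number of rainbow perfect matchings of `K^{(n)}_{n,k}` with a uniformly
random `n`-coloring of the edges (`k ≥ 2` fixed). Then `E[X²] ≤ (1+o(1))·E[X]²` as `n → ∞`,
where expectations are averages over all `n^(n^k)` colorings. -/
theorem second_moment_rainbow (k : ℕ) (hk : 2 ≤ k) :
    ∃ f : ℕ → ℝ, Tendsto f atTop (nhds 0) ∧
      ∀ᶠ n : ℕ in atTop,
        (∑ ι : (Fin k → Fin n) → Fin n, (rainbowCount n k ι : ℝ) ^ 2) / (n : ℝ) ^ (n ^ k)
          ≤ (1 + f n) *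
            ((∑ ι : (Fin k → Fin n) → Fin n, (rainbowCount n k ι : ℝ)) / (n : ℝ) ^ (n ^ k)) ^ 2 := by
  classical
  refine ⟨fseq, fseq_tendsto, ?_⟩
  filter_upwards [eventually_ge_atTop 2] with n hn
  set m := (PMs n k).card with hm
  set Q := (PMs n k) ×ˢ (PMs n k) with hQ
  have h2n : 2 * n ≤ n ^ k := by
    calc 2 * n ≤ n * n := Nat.mul_le_mul_right _ hn
      _ = n ^ 2 := (sq n).symm
      _ ≤ n ^ k := Nat.pow_le_pow_right (by omega) hk
  -- rainbowCount as a sum of indicators over matchings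
  have hrc : ∀ ι : (Fin k → Fin n) → Fin n, rainbowCount n k ι
      = ∑ M ∈ PMs n k, if Set.InjOn ι (M : Set (Fin k → Fin n)) then 1 else 0 := by
    intro ι
    rw [← Finset.card_filter, rainbowCount, ← card_filter_univ]
    simp only [PMs, Finset.filter_filter]
  have hcardn : ∀ M ∈ PMs n k, M.card = n :=
    fun M hM => pm_card (by omega) (mem_PMs.1 hM)
  -- first moment
  have hA : ∑ ι : (Fin k → Fin n) → Fin n, rainbowCount n k ι
      = m * (n.factorial * n ^ (n ^ k - n)) := by
    calc ∑ ι, rainbowCount n k ι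
        = ∑ ι : (Fin k → Fin n) → Fin n, ∑ M ∈ PMs n k,
            if Set.InjOn ι (M : Set (Fin k → Fin n)) then 1 else 0 :=
          Finset.sum_congr rfl (fun ι _ => hrc ι)
      _ = ∑ M ∈ PMs n k, ∑ ι : (Fin k → Fin n) → Fin n,
            if Set.InjOn ι (M : Set (Fin k → Fin n)) then 1 else 0 := Finset.sum_comm
      _ = ∑ M ∈ PMs n k, (n.factorial * n ^ (n ^ k - n)) := by
          refine Finset.sum_congr rfl (fun M hM => ?_)
          rw [← Finset.card_filter, card_filter_univ]
          exact card_injOn (hcardn M hM)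
      _ = m * (n.factorial * n ^ (n ^ k - n)) := by
          rw [Finset.sum_const, smul_eq_mul]
  -- second moment
  have hB : ∑ ι : (Fin k → Fin n) → Fin n, (rainbowCount n k ι) ^ 2
      ≤ n.factorial * n ^ (n ^ k - 2 * n) * ∑ p ∈ Q, Hw n ((p.1 ∩ p.2).card) := by
    have hsq : ∀ ι : (Fin k → Fin n) → Fin n, (rainbowCount n k ι) ^ 2
        = ∑ p ∈ Q, (if Set.InjOn ι (p.1 : Set (Fin k → Fin n)) ∧
            Set.InjOn ι (p.2 : Set (Fin k → Fin n)) then 1 else 0) := by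
      intro ι
      rw [sq, hrc, Finset.sum_mul_sum, hQ, Finset.sum_product]
      refine Finset.sum_congr rfl (fun M _ => Finset.sum_congr rfl (fun M' _ => ?_))
      by_cases h1 : Set.InjOn ι (M : Set (Fin k → Fin n)) <;>
        by_cases h2 : Set.InjOn ι (M' : Set (Fin k → Fin n)) <;> simp [h1, h2]
    calc ∑ ι : (Fin k → Fin n) → Fin n, (rainbowCount n k ι) ^ 2
        = ∑ p ∈ Q, ∑ ι : (Fin k → Fin n) → Fin n,
            (if Set.InjOn ι (p.1 : Set (Fin k → Fin n)) ∧
              Set.InjOn ι (p.2 : Set (Fin k → Fin n)) then 1 else 0) := by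
          rw [← Finset.sum_comm]
          exact Finset.sum_congr rfl (fun ι _ => hsq ι)
      _ ≤ ∑ p ∈ Q, n.factorial * n ^ (n ^ k - 2 * n) * Hw n ((p.1 ∩ p.2).card) := by
          refine Finset.sum_le_sum (fun p hp => ?_)
          rw [hQ, Finset.mem_product] at hp
          have hs : (p.1 ∩ p.2).card ≤ n :=
            le_trans (card_le_card inter_subset_left) (le_of_eq (hcardn p.1 hp.1))
          have hcnt := card_injOn_pair (hcardn p.1 hp.1) (hcardn p.2 hp.2)
          rw [← Finset.card_filter, card_filter_univ]
          refine le_trans hcnt (le_of_eq ?_)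
          have hexp : n ^ k - (2 * n - (p.1 ∩ p.2).card)
              = (n ^ k - 2 * n) + (p.1 ∩ p.2).card := by omega
          rw [hexp, pow_add, Hw]
          ring
      _ = n.factorial * n ^ (n ^ k - 2 * n) * ∑ p ∈ Q, Hw n ((p.1 ∩ p.2).card) := by
          rw [Finset.mul_sum]
  -- the weighted pair sum, compared with `m²·n!`
  have hHsum : (∑ p ∈ Q, (Hw n ((p.1 ∩ p.2).card) : ℝ))
      ≤ (1 + fseq n) * (m ^ 2 * n.factorial) := by
    have hident : ∑ p ∈ Q, Hw n ((p.1 ∩ p.2).card)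
        = m ^ 2 * n.factorial + ∑ t ∈ Icc 1 n,
            Dw n t * (Q.filter (fun p => t ≤ (p.1 ∩ p.2).card)).card := by
      have hsn : ∀ p ∈ Q, (p.1 ∩ p.2).card ≤ n := by
        intro p hp
        rw [hQ, Finset.mem_product] at hp
        exact le_trans (card_le_card inter_subset_left) (le_of_eq (hcardn p.1 hp.1))
      calc ∑ p ∈ Q, Hw n ((p.1 ∩ p.2).card)
          = ∑ p ∈ Q, (n.factorial + ∑ t ∈ Icc 1 ((p.1 ∩ p.2).card), Dw n t) :=
            Finset.sum_congr rfl (fun p hp => Hw_eq n (hsn p hp))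
        _ = ∑ _p ∈ Q, n.factorial + ∑ p ∈ Q, ∑ t ∈ Icc 1 ((p.1 ∩ p.2).card), Dw n t :=
            Finset.sum_add_distrib
        _ = m ^ 2 * n.factorial + ∑ t ∈ Icc 1 n,
              Dw n t * (Q.filter (fun p => t ≤ (p.1 ∩ p.2).card)).card := by
            congr 1
            · rw [Finset.sum_const, smul_eq_mul, hQ, Finset.card_product, ← hm, sq]
            · have hinner : ∀ p ∈ Q, ∑ t ∈ Icc 1 ((p.1 ∩ p.2).card), Dw n t
                  = ∑ t ∈ Icc 1 n, if t ≤ (p.1 ∩ p.2).card then Dw n t else 0 := by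
                intro p hp
                rw [← Finset.sum_filter]
                congr 1
                ext a
                simp only [Finset.mem_Icc, Finset.mem_filter]
                have := hsn p hp
                omega
              rw [Finset.sum_congr rfl hinner, Finset.sum_comm]
              refine Finset.sum_congr rfl (fun t _ => ?_)
              rw [← Finset.sum_filter, Finset.sum_const, smul_eq_mul, mul_comm]
    have hident' : (∑ p ∈ Q, (Hw n ((p.1 ∩ p.2).card) : ℝ))
        = (m ^ 2 * n.factorial : ℕ) + ∑ t ∈ Icc 1 n,
            (Dw n t : ℝ) * ((Q.filter (fun p => t ≤ (p.1 ∩ p.2).card)).card : ℝ) := by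
      rw [← Nat.cast_sum, hident]
      push_cast
      ring
    rw [hident']
    have htb : ∀ t ∈ Icc 1 n, (Dw n t : ℝ) *
        ((Q.filter (fun p => t ≤ (p.1 ∩ p.2).card)).card : ℝ)
        ≤ (m ^ 2 * n.factorial : ℕ) * ((Dw n t : ℝ) / (t.factorial * n.factorial)) := by
      intro t ht
      rw [Finset.mem_Icc] at ht
      have hpb := pairs_bound hk ht.1 ht.2 (n := n)
      have hNt : ((Q.filter (fun p => t ≤ (p.1 ∩ p.2).card)).card : ℝ)
          ≤ (m : ℝ) ^ 2 / (t.factorial : ℝ) := by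
        rw [le_div_iff₀ (by positivity)]
        exact_mod_cast hpb
      calc (Dw n t : ℝ) * ((Q.filter (fun p => t ≤ (p.1 ∩ p.2).card)).card : ℝ)
          ≤ (Dw n t : ℝ) * ((m : ℝ) ^ 2 / (t.factorial : ℝ)) :=
            mul_le_mul_of_nonneg_left hNt (by positivity)
        _ = (m ^ 2 * n.factorial : ℕ) * ((Dw n t : ℝ) / (t.factorial * n.factorial)) := by
            push_cast
            field_simp
    calc ((m ^ 2 * n.factorial : ℕ) : ℝ) + ∑ t ∈ Icc 1 n,
          (Dw n t : ℝ) * ((Q.filter (fun p => t ≤ (p.1 ∩ p.2).card)).card : ℝ)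
        ≤ ((m ^ 2 * n.factorial : ℕ) : ℝ) + ∑ t ∈ Icc 1 n,
            ((m ^ 2 * n.factorial : ℕ) : ℝ) * ((Dw n t : ℝ) / (t.factorial * n.factorial)) :=
          add_le_add_right (Finset.sum_le_sum htb) _
      _ = ((m ^ 2 * n.factorial : ℕ) : ℝ) * (1 + fseq n) := by
          rw [← Finset.mul_sum, fseq]
          ring
      _ = (1 + fseq n) * (m ^ 2 * n.factorial) := by
          push_cast
          ring
  -- final assembly
  have hnR : (0 : ℝ) < n := by
    have : (2 : ℝ) ≤ n := by exact_mod_cast hn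
    linarith
  have hP : (0 : ℝ) < (n : ℝ) ^ (n ^ k) := by positivity
  have hf0 : (0 : ℝ) ≤ 1 + fseq n := by
    have := fseq_nonneg n
    linarith
  rw [div_pow, ← mul_div_assoc, div_le_div_iff₀ hP (by positivity)]
  -- reduce to `B · P ≤ (1+f) A²`
  have hkey : (∑ ι : (Fin k → Fin n) → Fin n, (rainbowCount n k ι : ℝ) ^ 2) * (n : ℝ) ^ (n ^ k)
      ≤ (1 + fseq n) * (∑ ι : (Fin k → Fin n) → Fin n, (rainbowCount n k ι : ℝ)) ^ 2 := by
    have hAcast : (∑ ι : (Fin k → Fin n) → Fin n, (rainbowCount n k ι : ℝ))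
        = (m : ℝ) * (n.factorial * (n : ℝ) ^ (n ^ k - n)) := by
      rw [← Nat.cast_sum, hA]
      push_cast
      ring
    have hBcast : (∑ ι : (Fin k → Fin n) → Fin n, (rainbowCount n k ι : ℝ) ^ 2)
        ≤ (n.factorial : ℝ) * (n : ℝ) ^ (n ^ k - 2 * n) * ∑ p ∈ Q, (Hw n ((p.1 ∩ p.2).card) : ℝ) := by
      have : (∑ ι : (Fin k → Fin n) → Fin n, (rainbowCount n k ι : ℝ) ^ 2)
          = ((∑ ι : (Fin k → Fin n) → Fin n, (rainbowCount n k ι) ^ 2 : ℕ) : ℝ) := by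
        push_cast
        rfl
      rw [this, ← Nat.cast_sum (s := Q)]
      have := hB
      calc ((∑ ι : (Fin k → Fin n) → Fin n, (rainbowCount n k ι) ^ 2 : ℕ) : ℝ)
          ≤ ((n.factorial * n ^ (n ^ k - 2 * n) * ∑ p ∈ Q, Hw n ((p.1 ∩ p.2).card) : ℕ) : ℝ) := by
            exact_mod_cast hB
        _ = (n.factorial : ℝ) * (n : ℝ) ^ (n ^ k - 2 * n) *
              ((∑ p ∈ Q, Hw n ((p.1 ∩ p.2).card) : ℕ) : ℝ) := by
            push_cast
            ring
    calc (∑ ι : (Fin k → Fin n) → Fin n, (rainbowCount n k ι : ℝ) ^ 2) * (n : ℝ) ^ (n ^ k)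
        ≤ ((n.factorial : ℝ) * (n : ℝ) ^ (n ^ k - 2 * n) *
            ((1 + fseq n) * (m ^ 2 * n.factorial))) * (n : ℝ) ^ (n ^ k) := by
          refine mul_le_mul_of_nonneg_right (le_trans hBcast ?_) (le_of_lt hP)
          exact mul_le_mul_of_nonneg_left hHsum (by positivity)
      _ = (1 + fseq n) * ((m : ℝ) * (n.factorial * (n : ℝ) ^ (n ^ k - n))) ^ 2 := by
          have hexp : (n : ℝ) ^ (n ^ k - 2 * n) * (n : ℝ) ^ (n ^ k)
              = ((n : ℝ) ^ (n ^ k - n)) ^ 2 := by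
            rw [← pow_add, ← pow_mul]
            congr 1
            omega
          calc (n.factorial : ℝ) * (n : ℝ) ^ (n ^ k - 2 * n) *
                ((1 + fseq n) * (m ^ 2 * n.factorial)) * (n : ℝ) ^ (n ^ k)
              = (1 + fseq n) * ((m : ℝ) ^ 2 * (n.factorial : ℝ) ^ 2 *
                  ((n : ℝ) ^ (n ^ k - 2 * n) * (n : ℝ) ^ (n ^ k))) := by
                push_cast
                ring
            _ = (1 + fseq n) * ((m : ℝ) * (n.factorial * (n : ℝ) ^ (n ^ k - n))) ^ 2 := by
                rw [hexp]
                ring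
      _ = (1 + fseq n) * (∑ ι : (Fin k → Fin n) → Fin n, (rainbowCount n k ι : ℝ)) ^ 2 := by
          rw [hAcast]
  calc (∑ ι : (Fin k → Fin n) → Fin n, (rainbowCount n k ι : ℝ) ^ 2) *
        ((n : ℝ) ^ (n ^ k)) ^ 2
      = ((∑ ι : (Fin k → Fin n) → Fin n, (rainbowCount n k ι : ℝ) ^ 2) *
          (n : ℝ) ^ (n ^ k)) * (n : ℝ) ^ (n ^ k) := by ring
    _ ≤ ((1 + fseq n) * (∑ ι : (Fin k → Fin n) → Fin n, (rainbowCount n k ι : ℝ)) ^ 2) *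
          (n : ℝ) ^ (n ^ k) := mul_le_mul_of_nonneg_right hkey (le_of_lt hP)
end

section
/- Let X be the number of rainbow perfect matchings of K^{(n)}_{n,k}. Then for every ε > 0, P(|X - (n!)^k/n^n| > ε·(n!)^k/n^n) → 0 as n → ∞; in particular with high probability X = (1+o(1))·(n!)^k/n^n. -/
open Filter Finset

attribute [local instance] Classical.propDecidable

namespace RB

variable {n k : ℕ} {M : Finset (Fin k → Fin n)}

lemma coord_inj (hM : IsPerfectMatching n k M) (i : Fin k) :
    ∀ e ∈ M, ∀ e' ∈ M, e i = e' i → e = e' := by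
  intro e he e' he' h
  obtain ⟨f, _, hu⟩ := hM i (e i)
  rw [hu e ⟨he, rfl⟩, hu e' ⟨he', h.symm⟩]

lemma matching_card (hM : IsPerfectMatching n k M) (i : Fin k) : M.card = n := by
  have : M.card = (Finset.univ : Finset (Fin n)).card := by
    apply Finset.card_bij (fun e _ => e i)
    · intro a ha; exact mem_univ _
    · intro a ha b hb hab; exact coord_inj hM i a ha b hb hab
    · intro v _
      obtain ⟨e, ⟨he, hei⟩, _⟩ := hM i v
      exact ⟨e, he, hei⟩
  simpa using this

/-- edge of a tuple of permutations -/
def edgeOfPerm (p : Fin k → Equiv.Perm (Fin n)) (v : Fin n) : Fin k → Fin n :=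
  fun i => p i v

def toMatching (p : Fin k → Equiv.Perm (Fin n)) : Finset (Fin k → Fin n) :=
  Finset.image (edgeOfPerm p) Finset.univ

lemma mem_toMatching {p : Fin k → Equiv.Perm (Fin n)} {e : Fin k → Fin n} :
    e ∈ toMatching p ↔ ∃ v, edgeOfPerm p v = e := by
  simp [toMatching]

lemma toMatching_isPM (p : Fin k → Equiv.Perm (Fin n)) :
    IsPerfectMatching n k (toMatching p) := by
  intro i v
  refine ⟨edgeOfPerm p ((p i)⁻¹ v), ⟨mem_toMatching.2 ⟨_, rfl⟩, by simp [edgeOfPerm]⟩, ?_⟩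
  rintro e ⟨he, hei⟩
  obtain ⟨w, rfl⟩ := mem_toMatching.1 he
  have : w = (p i)⁻¹ v := by
    have : p i w = v := hei
    simp [← this]
  subst this; rfl

lemma toMatching_inj (hk0 : 0 < k) {p q : Fin k → Equiv.Perm (Fin n)}
    (hp : p ⟨0, hk0⟩ = 1) (hq : q ⟨0, hk0⟩ = 1)
    (h : toMatching p = toMatching q) : p = q := by
  funext i
  apply Equiv.ext
  intro v
  have hv : edgeOfPerm p v ∈ toMatching q := by
    rw [← h]; exact mem_toMatching.2 ⟨v, rfl⟩
  obtain ⟨w, hw⟩ := mem_toMatching.1 hv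
  have hz : w = v := by
    have := congrFun hw ⟨0, hk0⟩
    simpa [edgeOfPerm, hp, hq] using this
  have := congrFun hw i
  simp only [edgeOfPerm] at this
  rw [hz] at this
  exact this.symm

lemma matching_exists_perm (hk0 : 0 < k) (hM : IsPerfectMatching n k M) :
    ∃ p : Fin k → Equiv.Perm (Fin n), p ⟨0, hk0⟩ = 1 ∧ toMatching p = M := by
  set z : Fin k := ⟨0, hk0⟩ with hz
  -- the unique edge through v in coordinate z
  have hex : ∀ v : Fin n, ∃ e, e ∈ M ∧ e z = v := fun v => (hM z v).exists
  choose ev hevM hevz using hex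
  have hbij : ∀ i : Fin k, Function.Bijective (fun v => ev v i) := by
    intro i
    constructor
    · intro v v' h
      have : ev v = ev v' := coord_inj hM i _ (hevM v) _ (hevM v') h
      rw [← hevz v, this, hevz v']
    · intro u
      obtain ⟨e, ⟨he, hei⟩, _⟩ := hM i u
      refine ⟨e z, ?_⟩
      have : ev (e z) = e := coord_inj hM z _ (hevM (e z)) _ he (hevz (e z))
      show ev (e z) i = u
      rw [this, hei]
  refine ⟨fun i => Equiv.ofBijective _ (hbij i), ?_, ?_⟩
  · apply Equiv.ext; intro v; exact hevz v
  · ext e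
    rw [mem_toMatching]
    constructor
    · rintro ⟨v, rfl⟩
      have : edgeOfPerm (fun i => Equiv.ofBijective _ (hbij i)) v = ev v := by
        funext i; rfl
      rw [this]; exact hevM v
    · intro he
      refine ⟨e z, ?_⟩
      funext i
      show ev (e z) i = e i
      rw [coord_inj hM z _ (hevM (e z)) _ he (hevz (e z))]

lemma card_fixed_perms (hk0 : 0 < k) :
    Nat.card {p : Fin k → Equiv.Perm (Fin n) // p ⟨0, hk0⟩ = 1} = Nat.factorial n ^ (k - 1) := by
  set z : Fin k := ⟨0, hk0⟩
  have e : {p : Fin k → Equiv.Perm (Fin n) // p z = 1} ≃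
      ({i : Fin k // i ≠ z} → Equiv.Perm (Fin n)) := by
    refine ⟨fun p i => p.1 i.1, fun q => ⟨fun i => if h : i = z then 1 else q ⟨i, h⟩, by simp⟩,
      ?_, ?_⟩
    · rintro ⟨p, hp⟩
      ext i v
      by_cases h : i = z <;> simp [h, hp]
    · intro q
      funext i
      simp [i.2]
  rw [Nat.card_congr e, Nat.card_fun]
  have h1 : Nat.card (Equiv.Perm (Fin n)) = Nat.factorial n := by
    rw [Nat.card_eq_fintype_card, Fintype.card_perm, Fintype.card_fin]
  have h2 : Nat.card {i : Fin k // i ≠ z} = k - 1 := by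
    rw [Nat.card_eq_fintype_card]
    have := Fintype.card_subtype_compl (fun i : Fin k => i = z)
    simp only [Fintype.card_subtype_eq, Fintype.card_fin] at this
    convert this using 2
  rw [h1, h2]

lemma card_matchings (hk0 : 0 < k) :
    Nat.card {M : Finset (Fin k → Fin n) // IsPerfectMatching n k M} =
      Nat.factorial n ^ (k - 1) := by
  rw [← card_fixed_perms (n := n) hk0]
  symm
  apply Nat.card_eq_of_bijective
    (fun p => (⟨toMatching p.1, toMatching_isPM p.1⟩ : {M : Finset (Fin k → Fin n) // IsPerfectMatching n k M}))
  constructor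
  · rintro ⟨p, hp⟩ ⟨q, hq⟩ h
    simp only [Subtype.mk.injEq] at h ⊢
    exact toMatching_inj hk0 hp hq h
  · rintro ⟨M, hM⟩
    obtain ⟨p, hp, hpM⟩ := matching_exists_perm hk0 hM
    exact ⟨⟨p, hp⟩, by simp [hpM]⟩

lemma card_supersets_le (hk0 : 0 < k) {M₀ S : Finset (Fin k → Fin n)}
    (hM₀ : IsPerfectMatching n k M₀) (hS : S ⊆ M₀) :
    Nat.card {M' : Finset (Fin k → Fin n) // IsPerfectMatching n k M' ∧ S ⊆ M'} ≤
      Nat.factorial (n - S.card) ^ (k - 1) := by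
  classical
  set z : Fin k := ⟨0, hk0⟩
  -- transfer to permutation tuples
  have hcard : Nat.card {M' : Finset (Fin k → Fin n) // IsPerfectMatching n k M' ∧ S ⊆ M'} =
      Nat.card {p : Fin k → Equiv.Perm (Fin n) // p z = 1 ∧ S ⊆ toMatching p} := by
    symm
    apply Nat.card_eq_of_bijective (fun p =>
      (⟨toMatching p.1, toMatching_isPM p.1, p.2.2⟩ :
        {M' : Finset (Fin k → Fin n) // IsPerfectMatching n k M' ∧ S ⊆ M'}))
    constructor
    · rintro ⟨p, hp, _⟩ ⟨q, hq, _⟩ h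
      simp only [Subtype.mk.injEq] at h ⊢
      exact toMatching_inj hk0 hp hq h
    · rintro ⟨M', hM', hSM'⟩
      obtain ⟨p, hp, hpM⟩ := matching_exists_perm hk0 hM'
      exact ⟨⟨p, hp, by rw [hpM]; exact hSM'⟩, by simp [hpM]⟩
  rw [hcard]
  set D : Fin k → Finset (Fin n) := fun i => S.image (fun e => e i) with hD
  -- the key coordinates facts
  have hpe : ∀ p : Fin k → Equiv.Perm (Fin n), p z = 1 → S ⊆ toMatching p →
      ∀ e ∈ S, ∀ i, p i (e z) = e i := by
    intro p hp hSp e he i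
    obtain ⟨v, hv⟩ := mem_toMatching.1 (hSp he)
    have hvz : v = e z := by
      have := congrFun hv z
      simpa [edgeOfPerm, hp] using this
    rw [← hvz]
    exact congrFun hv i
  have havoid : ∀ p : Fin k → Equiv.Perm (Fin n), p z = 1 → S ⊆ toMatching p →
      ∀ i, ∀ v : Fin n, v ∉ D z → p i v ∉ D i := by
    intro p hp hSp i v hv hmem
    simp only [hD, Finset.mem_image] at hmem
    obtain ⟨e, he, hei⟩ := hmem
    apply hv
    have : p i (e z) = e i := hpe p hp hSp e he i
    have hveq : v = e z := by
      apply (p i).injective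
      rw [this, hei]
    rw [hveq]
    simp only [hD, Finset.mem_image]
    exact ⟨e, he, rfl⟩
  -- inject into tuples of embeddings
  set T := ∀ i : {i : Fin k // i ≠ z},
      ({v : Fin n // v ∉ D z} ↪ {u : Fin n // u ∉ D i.1}) with hT
  have hinj : ∃ f : {p : Fin k → Equiv.Perm (Fin n) // p z = 1 ∧ S ⊆ toMatching p} → T,
      Function.Injective f := by
    refine ⟨fun p i => ⟨fun v => ⟨p.1 i.1 v.1, havoid p.1 p.2.1 p.2.2 i.1 v.1 v.2⟩, ?_⟩, ?_⟩
    · intro a b hab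
      simp only [Subtype.mk.injEq] at hab
      exact Subtype.ext ((p.1 i.1).injective hab)
    · rintro ⟨p, hp, hSp⟩ ⟨q, hq, hSq⟩ h
      simp only [Subtype.mk.injEq]
      funext i
      apply Equiv.ext
      intro v
      by_cases hiz : i = z
      · rw [hiz, hp, hq]
      · by_cases hvD : v ∈ D z
        · simp only [hD, Finset.mem_image] at hvD
          obtain ⟨e, he, hez⟩ := hvD
          rw [← hez, hpe p hp hSp e he i, hpe q hq hSq e he i]
        · have := congrFun h ⟨i, hiz⟩
          have := congrFun (congrArg Function.Embedding.toFun this) ⟨v, hvD⟩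
          simpa using this
  obtain ⟨f, hf⟩ := hinj
  calc Nat.card {p : Fin k → Equiv.Perm (Fin n) // p z = 1 ∧ S ⊆ toMatching p}
      ≤ Nat.card T := Nat.card_le_card_of_injective f hf
    _ = Nat.factorial (n - S.card) ^ (k - 1) := by
        have hDzcard : ∀ i, (D i).card = S.card := by
          intro i
          apply Finset.card_image_of_injOn
          intro e he e' he' h
          exact coord_inj hM₀ i e (hS he) e' (hS he') h
        have hcompl : ∀ i : Fin k, Fintype.card {v : Fin n // v ∉ D i} = n - S.card := by
          intro i
          have := Fintype.card_subtype_compl (fun v : Fin n => v ∈ D i)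
          rw [this]
          congr 1
          · exact Fintype.card_fin n
          · rw [← hDzcard i, ← Fintype.card_coe]
        rw [hT, Nat.card_pi]
        have : ∀ i : {i : Fin k // i ≠ z},
            Nat.card ({v : Fin n // v ∉ D z} ↪ {u : Fin n // u ∉ D i.1}) =
              Nat.factorial (n - S.card) := by
          intro i
          rw [Nat.card_eq_fintype_card, Fintype.card_embedding_eq, hcompl, hcompl,
            Nat.descFactorial_self]
        rw [Finset.prod_congr rfl (fun i _ => this i), Finset.prod_const]
        congr 1
        rw [Finset.card_univ]
        have := Fintype.card_subtype_compl (fun i : Fin k => i = z)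
        simp only [Fintype.card_subtype_eq, Fintype.card_fin] at this
        convert this using 2

lemma card_restrict (A : Finset (Fin k → Fin n)) (Q : (A → Fin n) → Prop) :
    Nat.card {ι : (Fin k → Fin n) → Fin n // Q (fun a => ι a.1)} =
      Nat.card {f : A → Fin n // Q f} * n ^ (n ^ k - A.card) := by
  classical
  have e : {ι : (Fin k → Fin n) → Fin n // Q (fun a => ι a.1)} ≃
      {f : A → Fin n // Q f} × ({e : Fin k → Fin n // e ∉ A} → Fin n) := by
    refine ⟨fun ι => (⟨fun a => ι.1 a.1, ι.2⟩, fun e => ι.1 e.1),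
      fun x => ⟨fun e => if h : e ∈ A then x.1.1 ⟨e, h⟩ else x.2 ⟨e, h⟩, ?_⟩, ?_, ?_⟩
    · have : (fun a : A => if h : a.1 ∈ A then x.1.1 ⟨a.1, h⟩ else x.2 ⟨a.1, h⟩) = x.1.1 := by
        funext a
        simp [a.2]
      rw [this]
      exact x.1.2
    · rintro ⟨ι, hι⟩
      apply Subtype.ext
      funext e
      by_cases h : e ∈ A <;> simp [h]
    · rintro ⟨⟨f, hf⟩, g⟩
      apply Prod.ext
      · apply Subtype.ext
        funext a
        simp [a.2]
      · funext e
        simp [e.2]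
  rw [Nat.card_congr e, Nat.card_prod]
  congr 1
  rw [Nat.card_fun, Nat.card_eq_fintype_card (α := Fin n), Fintype.card_fin,
    Nat.card_eq_fintype_card]
  congr 1
  have := Fintype.card_subtype_compl (fun e : Fin k → Fin n => e ∈ A)
  rw [this, ← Fintype.card_coe]
  congr 1
  rw [Fintype.card_fun, Fintype.card_fin, Fintype.card_fin]

lemma card_injective_eq {α : Type*} [Fintype α] (h : Fintype.card α = n) :
    Nat.card {f : α → Fin n // Function.Injective f} = Nat.factorial n := by
  classical
  rw [Nat.card_congr (Equiv.subtypeInjectiveEquivEmbedding α (Fin n)),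
    Nat.card_eq_fintype_card, Fintype.card_embedding_eq, Fintype.card_fin, h,
    Nat.descFactorial_self]

lemma card_injOn_colorings (hk0 : 0 < k) (hM : IsPerfectMatching n k M) :
    Nat.card {ι : (Fin k → Fin n) → Fin n // Set.InjOn ι (M : Set (Fin k → Fin n))} =
      Nat.factorial n * n ^ (n ^ k - n) := by
  classical
  have h1 : ∀ ι : (Fin k → Fin n) → Fin n,
      Set.InjOn ι (M : Set (Fin k → Fin n)) ↔ Function.Injective (fun a : M => ι a.1) := by
    intro ι
    constructor
    · intro h a b hab
      exact Subtype.ext (h (by simpa using a.2) (by simpa using b.2) hab)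
    · intro h x hx y hy hxy
      have := h (a₁ := ⟨x, by simpa using hx⟩) (a₂ := ⟨y, by simpa using hy⟩) hxy
      simpa using congrArg Subtype.val this
  rw [Nat.card_congr (Equiv.subtypeEquivRight h1),
    card_restrict M (fun f => Function.Injective f),
    card_injective_eq (by rw [Fintype.card_coe]; exact matching_card hM ⟨0, hk0⟩),
    matching_card hM ⟨0, hk0⟩]

lemma card_pair_colorings_le (hk0 : 0 < k) {M M' : Finset (Fin k → Fin n)}
    (hM : IsPerfectMatching n k M) (hM' : IsPerfectMatching n k M') :
    Nat.card {ι : (Fin k → Fin n) → Fin n //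
        Set.InjOn ι (M : Set (Fin k → Fin n)) ∧ Set.InjOn ι (M' : Set (Fin k → Fin n))} ≤
      Nat.factorial n * Nat.factorial (n - (M ∩ M').card) * n ^ (n ^ k - (M ∪ M').card) := by
  classical
  set A := M ∪ M' with hA
  set Q : (A → Fin n) → Prop := fun f =>
    (∀ a b : A, a.1 ∈ M → b.1 ∈ M → f a = f b → a = b) ∧
    (∀ a b : A, a.1 ∈ M' → b.1 ∈ M' → f a = f b → a = b) with hQ
  have hiff : ∀ ι : (Fin k → Fin n) → Fin n,
      (Set.InjOn ι (M : Set (Fin k → Fin n)) ∧ Set.InjOn ι (M' : Set (Fin k → Fin n))) ↔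
        Q (fun a => ι a.1) := by
    intro ι
    constructor
    · rintro ⟨h1, h2⟩
      constructor
      · intro a b ha hb hab
        exact Subtype.ext (h1 (by simpa using ha) (by simpa using hb) hab)
      · intro a b ha hb hab
        exact Subtype.ext (h2 (by simpa using ha) (by simpa using hb) hab)
    · rintro ⟨h1, h2⟩
      constructor
      · intro x hx y hy hxy
        have hx' : x ∈ M := by simpa using hx
        have hy' : y ∈ M := by simpa using hy
        have := h1 ⟨x, Finset.mem_union_left _ hx'⟩ ⟨y, Finset.mem_union_left _ hy'⟩ hx' hy' hxy
        simpa using congrArg Subtype.val this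
      · intro x hx y hy hxy
        have hx' : x ∈ M' := by simpa using hx
        have hy' : y ∈ M' := by simpa using hy
        have := h2 ⟨x, Finset.mem_union_right _ hx'⟩ ⟨y, Finset.mem_union_right _ hy'⟩ hx' hy' hxy
        simpa using congrArg Subtype.val this
  rw [Nat.card_congr (Equiv.subtypeEquivRight hiff), card_restrict A Q]
  apply Nat.mul_le_mul_right
  -- now bound the count of restricted colorings
  have hcardM : Fintype.card M = n := by rw [Fintype.card_coe]; exact matching_card hM ⟨0, hk0⟩
  set t := (M ∩ M').card with ht
  have hcard1 : (M' \ M).card = n - t := by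
    have h1 := Finset.card_sdiff_add_card_inter M' M
    have h2 : (M' ∩ M).card = t := by rw [ht, Finset.inter_comm]
    have h3 : M'.card = n := matching_card hM' ⟨0, hk0⟩
    omega
  have hcard2 : (M \ M').card = n - t := by
    have h1 := Finset.card_sdiff_add_card_inter M M'
    have h3 : M.card = n := matching_card hM ⟨0, hk0⟩
    omega
  -- injection into pairs of embeddings
  have hinj : ∃ F : {f : A → Fin n // Q f} →
      ((M ↪ Fin n) × ((M' \ M : Finset (Fin k → Fin n)) ↪ (M \ M' : Finset (Fin k → Fin n)))),
      Function.Injective F := by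
    have hMA : ∀ x : (M : Finset (Fin k → Fin n)), x.1 ∈ A := fun x => Finset.mem_union_left _ x.2
    have hM'A : ∀ x : (M' \ M : Finset (Fin k → Fin n)), x.1 ∈ A :=
      fun x => Finset.mem_union_right _ (Finset.mem_sdiff.1 x.2).1
    -- data extraction
    have hg : ∀ f : {f : A → Fin n // Q f},
        Function.Bijective (fun x : M => f.1 ⟨x.1, hMA x⟩) := by
      rintro ⟨f, hf1, hf2⟩
      have hinj : Function.Injective (fun x : M => f ⟨x.1, hMA x⟩) := by
        intro a b h
        have := hf1 ⟨a.1, hMA a⟩ ⟨b.1, hMA b⟩ a.2 b.2 h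
        have hv := Subtype.ext_iff.1 this
        exact Subtype.ext hv
      exact (Fintype.bijective_iff_injective_and_card _).2
        ⟨hinj, by rw [hcardM, Fintype.card_fin]⟩
    set φv : ∀ f : {f : A → Fin n // Q f},
        (M' \ M : Finset (Fin k → Fin n)) → M := fun f x =>
      Function.surjInv (hg f).surjective (f.1 ⟨x.1, hM'A x⟩) with hφv
    have hφeq : ∀ (f : {f : A → Fin n // Q f}) (x : (M' \ M : Finset (Fin k → Fin n))),
        f.1 ⟨(φv f x).1, hMA _⟩ = f.1 ⟨x.1, hM'A x⟩ := by
      intro f x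
      exact Function.surjInv_eq (hg f).surjective _
    have hφmem : ∀ (f : {f : A → Fin n // Q f}) (x : (M' \ M : Finset (Fin k → Fin n))),
        (φv f x).1 ∈ M \ M' := by
      rintro f x
      rw [Finset.mem_sdiff]
      refine ⟨(φv f x).2, ?_⟩
      intro hmem
      have hx2 := Finset.mem_sdiff.1 x.2
      have := f.2.2 ⟨(φv f x).1, hMA _⟩ ⟨x.1, hM'A x⟩ hmem hx2.1 (hφeq f x)
      have hveq : (φv f x).1 = x.1 := Subtype.ext_iff.1 this
      exact hx2.2 (hveq ▸ (φv f x).2)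
    have hφinj : ∀ (f : {f : A → Fin n // Q f}), Function.Injective (fun x => (⟨(φv f x).1, hφmem f x⟩ :
        (M \ M' : Finset (Fin k → Fin n)))) := by
      intro f a b h
      have hv0 := Subtype.ext_iff.1 h
      have h1 : (φv f a) = (φv f b) := Subtype.ext hv0
      have h2 : f.1 ⟨a.1, hM'A a⟩ = f.1 ⟨b.1, hM'A b⟩ := by
        rw [← hφeq f a, ← hφeq f b, h1]
      have hx2a := Finset.mem_sdiff.1 a.2
      have hx2b := Finset.mem_sdiff.1 b.2
      have := f.2.2 ⟨a.1, hM'A a⟩ ⟨b.1, hM'A b⟩ hx2a.1 hx2b.1 h2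
      have hv := Subtype.ext_iff.1 this
      exact Subtype.ext hv
    refine ⟨fun f => (⟨fun x => f.1 ⟨x.1, hMA x⟩, (hg f).injective⟩,
      ⟨fun x => ⟨(φv f x).1, hφmem f x⟩, hφinj f⟩), ?_⟩
    rintro f f' h
    have h1 := congrArg Prod.fst h
    have h2 := congrArg Prod.snd h
    simp only [Function.Embedding.mk.injEq] at h1 h2
    apply Subtype.ext
    funext e
    rcases Finset.mem_union.1 e.2 with he | he
    · have := congrFun h1 ⟨e.1, he⟩
      simpa using this
    · by_cases heM : e.1 ∈ M
      · have := congrFun h1 ⟨e.1, heM⟩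
        simpa using this
      · set x : (M' \ M : Finset (Fin k → Fin n)) := ⟨e.1, Finset.mem_sdiff.2 ⟨he, heM⟩⟩
        have hx : (⟨x.1, hM'A x⟩ : A) = e := Subtype.ext rfl
        have hφx0 := Subtype.ext_iff.1 (congrFun h2 x)
        have hφx : (φv f x).1 = (φv f' x).1 := hφx0
        calc f.1 e = f.1 ⟨x.1, hM'A x⟩ := by rw [hx]
          _ = f.1 ⟨(φv f x).1, hMA _⟩ := (hφeq f x).symm
          _ = f'.1 ⟨(φv f x).1, hMA _⟩ := congrFun h1 _
          _ = f'.1 ⟨(φv f' x).1, hMA _⟩ := by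
              rw [show (⟨(φv f x).1, hMA _⟩ : A) = ⟨(φv f' x).1, hMA _⟩ from Subtype.ext hφx]
          _ = f'.1 ⟨x.1, hM'A x⟩ := hφeq f' x
          _ = f'.1 e := by rw [hx]
  obtain ⟨F, hF⟩ := hinj
  calc Nat.card {f : A → Fin n // Q f}
      ≤ Nat.card (((M : Finset (Fin k → Fin n)) ↪ Fin n) ×
          ((M' \ M : Finset (Fin k → Fin n)) ↪ (M \ M' : Finset (Fin k → Fin n)))) :=
        Nat.card_le_card_of_injective F hF
    _ = Nat.factorial n * Nat.factorial (n - t) := by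
        rw [Nat.card_prod, Nat.card_eq_fintype_card, Nat.card_eq_fintype_card,
          Fintype.card_embedding_eq, Fintype.card_embedding_eq, Fintype.card_fin, hcardM,
          Nat.descFactorial_self, Fintype.card_coe, Fintype.card_coe, hcard1, hcard2,
          Nat.descFactorial_self]

lemma rainbow_eq_card_filter (ι : (Fin k → Fin n) → Fin n) :
    rainbowCount n k ι = (Finset.univ.filter (fun M : Finset (Fin k → Fin n) =>
      IsPerfectMatching n k M ∧ Set.InjOn ι (M : Set (Fin k → Fin n)))).card := by
  rw [rainbowCount, Nat.card_eq_fintype_card, Fintype.card_subtype]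

lemma rainbow_eq_sum (ι : (Fin k → Fin n) → Fin n) :
    rainbowCount n k ι = ∑ M ∈ Finset.univ.filter (fun M : Finset (Fin k → Fin n) =>
      IsPerfectMatching n k M), (if Set.InjOn ι (M : Set (Fin k → Fin n)) then 1 else 0) := by
  rw [rainbow_eq_card_filter, Finset.card_filter]
  rw [Finset.sum_filter]
  apply Finset.sum_congr rfl
  intro M _
  by_cases h1 : IsPerfectMatching n k M <;> by_cases h2 : Set.InjOn ι (M : Set (Fin k → Fin n)) <;>
    simp [h1, h2]

lemma card_matchings_filter (hk0 : 0 < k) :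
    (Finset.univ.filter (fun M : Finset (Fin k → Fin n) => IsPerfectMatching n k M)).card =
      Nat.factorial n ^ (k - 1) := by
  rw [← card_matchings (n := n) hk0, Nat.card_eq_fintype_card, Fintype.card_subtype]

lemma sum_rainbow (hk0 : 0 < k) :
    ∑ ι : (Fin k → Fin n) → Fin n, rainbowCount n k ι =
      Nat.factorial n ^ k * n ^ (n ^ k - n) := by
  classical
  simp_rw [rainbow_eq_sum]
  rw [Finset.sum_comm]
  have h2 : ∀ M ∈ Finset.univ.filter (fun M : Finset (Fin k → Fin n) =>
      IsPerfectMatching n k M),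
      (∑ ι : (Fin k → Fin n) → Fin n,
        if Set.InjOn ι (M : Set (Fin k → Fin n)) then 1 else 0) =
        Nat.factorial n * n ^ (n ^ k - n) := by
    intro M hM
    rw [Finset.mem_filter] at hM
    rw [← Finset.card_filter, ← Fintype.card_subtype, ← Nat.card_eq_fintype_card]
    exact card_injOn_colorings hk0 hM.2
  rw [Finset.sum_congr rfl h2, Finset.sum_const, card_matchings_filter hk0, smul_eq_mul,
    ← mul_assoc, ← pow_succ]
  congr 2
  omega

lemma sum_rainbow_sq_le (hk0 : 0 < k) :
    ∑ ι : (Fin k → Fin n) → Fin n, (rainbowCount n k ι) ^ 2 ≤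
      ∑ M ∈ Finset.univ.filter (fun M : Finset (Fin k → Fin n) => IsPerfectMatching n k M),
      ∑ M' ∈ Finset.univ.filter (fun M : Finset (Fin k → Fin n) => IsPerfectMatching n k M),
        Nat.factorial n * Nat.factorial (n - (M ∩ M').card) * n ^ (n ^ k - (M ∪ M').card) := by
  classical
  set P := Finset.univ.filter (fun M : Finset (Fin k → Fin n) => IsPerfectMatching n k M) with hP
  have h1 : ∀ ι : (Fin k → Fin n) → Fin n, (rainbowCount n k ι) ^ 2 =
      ∑ M ∈ P, ∑ M' ∈ P, (if Set.InjOn ι (M : Set (Fin k → Fin n)) ∧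
        Set.InjOn ι (M' : Set (Fin k → Fin n)) then 1 else 0) := by
    intro ι
    rw [pow_two, rainbow_eq_sum, Finset.sum_mul_sum]
    apply Finset.sum_congr rfl; intro M _
    apply Finset.sum_congr rfl; intro M' _
    by_cases h1 : Set.InjOn ι (M : Set (Fin k → Fin n)) <;>
      by_cases h2 : Set.InjOn ι (M' : Set (Fin k → Fin n)) <;> simp [h1, h2]
  simp_rw [h1]
  rw [Finset.sum_comm]
  apply Finset.sum_le_sum
  intro M hM
  rw [Finset.sum_comm]
  apply Finset.sum_le_sum
  intro M' hM'
  rw [Finset.mem_filter] at hM hM'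
  rw [← Finset.card_filter, ← Fintype.card_subtype, ← Nat.card_eq_fintype_card]
  exact card_pair_colorings_le hk0 hM.2 hM'.2

lemma c_telescope : ∀ t ≤ n,
    Nat.factorial n * Nat.factorial (n - t) * n ^ t =
      Nat.factorial n * Nat.factorial n +
        ∑ s ∈ Finset.Icc 1 t,
          Nat.factorial n * n ^ (s - 1) * Nat.factorial (n - s) * (s - 1) := by
  intro t
  induction t with
  | zero => simp
  | succ t ih =>
    intro ht
    rw [Finset.sum_Icc_succ_top (by omega : 1 ≤ t + 1), ← add_assoc, ← ih (by omega), pow_succ]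
    set m := n - (t + 1) with hm
    have hnt : n - t = m + 1 := by omega
    have hsum : m + 1 + t = n := by omega
    rw [hnt, Nat.factorial_succ]
    have hts : t + 1 - 1 = t := by omega
    rw [hts]
    calc Nat.factorial n * Nat.factorial m * (n ^ t * n)
        = Nat.factorial n * Nat.factorial m * n ^ t * (m + 1 + t) := by rw [hsum]; ring
      _ = Nat.factorial n * ((m + 1) * Nat.factorial m) * n ^ t +
            Nat.factorial n * n ^ t * Nat.factorial m * t := by ring

lemma pair_sum_le (hk : 2 ≤ k) (hn : 2 ≤ n) :
    (∑ M ∈ Finset.univ.filter (fun M : Finset (Fin k → Fin n) => IsPerfectMatching n k M),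
      ∑ M' ∈ Finset.univ.filter (fun M : Finset (Fin k → Fin n) => IsPerfectMatching n k M),
        Nat.factorial n * Nat.factorial (n - (M ∩ M').card) * n ^ (n ^ k - (M ∪ M').card)) ≤
      n ^ (n ^ k - 2 * n) * (Nat.factorial n ^ (2 * k) +
        ∑ s ∈ Finset.Icc 1 n,
          (Nat.factorial n * n ^ (s - 1) * Nat.factorial (n - s) * (s - 1)) *
          (Nat.factorial n ^ (k - 1) * n.choose s * Nat.factorial (n - s) ^ (k - 1))) := by
  classical
  have hk0 : 0 < k := by omega
  set P := Finset.univ.filter (fun M : Finset (Fin k → Fin n) => IsPerfectMatching n k M) with hP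
  have h2n : 2 * n ≤ n ^ k := by
    have h1 : n ^ 2 ≤ n ^ k := Nat.pow_le_pow_right (by omega) hk
    have h2 : 2 * n ≤ n ^ 2 := by rw [pow_two]; nlinarith
    omega
  -- rewrite each summand
  have hsummand : ∀ M ∈ P, ∀ M' ∈ P,
      Nat.factorial n * Nat.factorial (n - (M ∩ M').card) * n ^ (n ^ k - (M ∪ M').card) =
        n ^ (n ^ k - 2 * n) *
          (Nat.factorial n * Nat.factorial (n - (M ∩ M').card) * n ^ (M ∩ M').card) := by
    intro M hM M' hM'
    rw [hP, Finset.mem_filter] at hM hM'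
    have hMc : M.card = n := matching_card hM.2 ⟨0, hk0⟩
    have hM'c : M'.card = n := matching_card hM'.2 ⟨0, hk0⟩
    have ht : (M ∩ M').card ≤ n :=
      (Finset.card_le_card Finset.inter_subset_left).trans (le_of_eq hMc)
    have hu := Finset.card_union_add_card_inter M M'
    have hexp : n ^ k - (M ∪ M').card = (n ^ k - 2 * n) + (M ∩ M').card := by omega
    rw [hexp, pow_add]
    ring
  rw [Finset.sum_congr rfl (fun M hM => Finset.sum_congr rfl (fun M' hM' => hsummand M hM M' hM'))]
  simp_rw [← Finset.mul_sum]
  apply Nat.mul_le_mul_left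
  -- telescope
  have htel : ∀ M ∈ P, ∀ M' ∈ P,
      Nat.factorial n * Nat.factorial (n - (M ∩ M').card) * n ^ (M ∩ M').card =
        Nat.factorial n * Nat.factorial n +
          ∑ s ∈ Finset.Icc 1 n, (if s ≤ (M ∩ M').card then
            Nat.factorial n * n ^ (s - 1) * Nat.factorial (n - s) * (s - 1) else 0) := by
    intro M hM M' hM'
    rw [hP, Finset.mem_filter] at hM
    have hMc : M.card = n := matching_card hM.2 ⟨0, hk0⟩
    have ht : (M ∩ M').card ≤ n :=
      (Finset.card_le_card Finset.inter_subset_left).trans (le_of_eq hMc)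
    rw [c_telescope _ ht]
    congr 1
    rw [← Finset.sum_filter]
    apply Finset.sum_congr _ (fun _ _ => rfl)
    ext s
    simp only [Finset.mem_filter, Finset.mem_Icc]
    omega
  rw [Finset.sum_congr rfl (fun M hM => Finset.sum_congr rfl (fun M' hM' => htel M hM M' hM'))]
  simp_rw [Finset.sum_add_distrib]
  gcongr ?_ + ?_
  · -- constant part
    rw [Finset.sum_const, Finset.sum_const, smul_eq_mul, smul_eq_mul, ← mul_assoc]
    have hPcard : P.card = Nat.factorial n ^ (k - 1) := card_matchings_filter hk0
    rw [hPcard]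
    apply le_of_eq
    calc Nat.factorial n ^ (k-1) * Nat.factorial n ^ (k-1) * (Nat.factorial n * Nat.factorial n)
        = Nat.factorial n ^ ((k-1) + (k-1) + 2) := by rw [pow_add, pow_add, pow_two]
      _ = Nat.factorial n ^ (2 * k) := by congr 1; omega
  · -- variable part
    have h1 : ∀ y ∈ P, (∑ x ∈ P, ∑ s ∈ Finset.Icc 1 n,
        (if s ≤ (y ∩ x).card then
          Nat.factorial n * n ^ (s - 1) * Nat.factorial (n - s) * (s - 1) else 0))
        = ∑ s ∈ Finset.Icc 1 n, ∑ x ∈ P,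
        (if s ≤ (y ∩ x).card then
          Nat.factorial n * n ^ (s - 1) * Nat.factorial (n - s) * (s - 1) else 0) :=
      fun y _ => Finset.sum_comm
    rw [Finset.sum_congr rfl h1, Finset.sum_comm]
    apply Finset.sum_le_sum
    intro s hs
    rw [Finset.mem_Icc] at hs
    -- for each matching y, bound the count of x sharing ≥ s edges
    have h2 : ∀ y ∈ P, (∑ x ∈ P,
        (if s ≤ (y ∩ x).card then
          Nat.factorial n * n ^ (s - 1) * Nat.factorial (n - s) * (s - 1) else 0)) ≤
        (n.choose s * Nat.factorial (n - s) ^ (k - 1)) *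
          (Nat.factorial n * n ^ (s - 1) * Nat.factorial (n - s) * (s - 1)) := by
      intro y hy
      rw [hP, Finset.mem_filter] at hy
      have hyc : y.card = n := matching_card hy.2 ⟨0, hk0⟩
      rw [← Finset.sum_filter, Finset.sum_const, smul_eq_mul]
      apply Nat.mul_le_mul_right
      -- card bound via biUnion over s-subsets of y
      have hsub : P.filter (fun x => s ≤ (y ∩ x).card) ⊆
          (Finset.powersetCard s y).biUnion (fun S => P.filter (fun x => S ⊆ x)) := by
        intro x hx
        rw [Finset.mem_filter] at hx
        obtain ⟨S, hS1, hS2⟩ := Finset.exists_subset_card_eq hx.2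
        rw [Finset.mem_biUnion]
        exact ⟨S, Finset.mem_powersetCard.2 ⟨hS1.trans Finset.inter_subset_left, hS2⟩,
          Finset.mem_filter.2 ⟨hx.1, hS1.trans Finset.inter_subset_right⟩⟩
      calc (P.filter (fun x => s ≤ (y ∩ x).card)).card
          ≤ ((Finset.powersetCard s y).biUnion (fun S => P.filter (fun x => S ⊆ x))).card :=
            Finset.card_le_card hsub
        _ ≤ ∑ S ∈ Finset.powersetCard s y, (P.filter (fun x => S ⊆ x)).card :=
            Finset.card_biUnion_le
        _ ≤ ∑ S ∈ Finset.powersetCard s y, Nat.factorial (n - s) ^ (k - 1) := by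
            apply Finset.sum_le_sum
            intro S hS
            rw [Finset.mem_powersetCard] at hS
            have : P.filter (fun x => S ⊆ x) = Finset.univ.filter
                (fun x : Finset (Fin k → Fin n) => IsPerfectMatching n k x ∧ S ⊆ x) := by
              rw [hP, Finset.filter_filter]
            rw [this, ← Fintype.card_subtype, ← Nat.card_eq_fintype_card]
            have := card_supersets_le hk0 hy.2 hS.1
            rwa [hS.2] at this
        _ = n.choose s * Nat.factorial (n - s) ^ (k - 1) := by
            rw [Finset.sum_const, smul_eq_mul, Finset.card_powersetCard, hyc]
    calc (∑ y ∈ P, ∑ x ∈ P,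
        (if s ≤ (y ∩ x).card then
          Nat.factorial n * n ^ (s - 1) * Nat.factorial (n - s) * (s - 1) else 0))
        ≤ ∑ y ∈ P, (n.choose s * Nat.factorial (n - s) ^ (k - 1)) *
            (Nat.factorial n * n ^ (s - 1) * Nat.factorial (n - s) * (s - 1)) :=
          Finset.sum_le_sum h2
      _ = Nat.factorial n * n ^ (s - 1) * Nat.factorial (n - s) * (s - 1) *
            (Nat.factorial n ^ (k - 1) * n.choose s * Nat.factorial (n - s) ^ (k - 1)) := by
          rw [Finset.sum_const, smul_eq_mul, card_matchings_filter hk0]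
          ring

lemma H1 (n : ℕ) : ∀ r : ℕ, r + 3 ≤ n →
    4 ^ r * (n ^ (r + 2) * Nat.factorial (n - (r + 2))) ≤
      3 ^ r * (Nat.factorial n * Nat.factorial (r + 2)) := by
  intro r
  induction r with
  | zero =>
    intro h
    obtain ⟨m, rfl⟩ : ∃ m, n = m + 3 := ⟨n - 3, by omega⟩
    simp only [pow_zero, one_mul]
    have h1 : (m + 3) - 2 = m + 1 := by omega
    rw [h1]
    have h2 : Nat.factorial (m + 3) = (m + 3) * (m + 2) * Nat.factorial (m + 1) := by
      rw [show m + 3 = (m + 2) + 1 from rfl, Nat.factorial_succ,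
        show m + 2 = (m + 1) + 1 from rfl, Nat.factorial_succ]
      ring
    rw [h2]
    have h3 : Nat.factorial 2 = 2 := rfl
    rw [h3]
    have h4 : (m + 3) ^ (0 + 2) = (m + 3) * (m + 3) := by ring
    rw [h4]
    nlinarith [Nat.factorial_pos (m + 1)]
  | succ r ih =>
    intro h
    obtain ⟨d, rfl⟩ : ∃ d, n = r + d + 4 := ⟨n - (r + 4), by omega⟩
    have ih' := ih (by omega)
    set N := r + d + 4 with hN
    have e1 : N - (r + 2) = d + 2 := by omega
    have e2 : N - (r + 3) = d + 1 := by omega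
    have e3 : N - (r + 1 + 2) = d + 1 := by omega
    rw [e3]
    rw [e1] at ih'
    have key : 4 * N ≤ 3 * ((r + 3) * (d + 2)) := by rw [hN]; nlinarith
    have hfac : Nat.factorial (d + 2) = (d + 2) * Nat.factorial (d + 1) := Nat.factorial_succ _
    have hfac2 : Nat.factorial (r + 3) = (r + 3) * Nat.factorial (r + 2) := Nat.factorial_succ _
    refine Nat.le_of_mul_le_mul_left ?_ (show 0 < d + 2 by omega)
    calc (d + 2) * (4 ^ (r + 1) * (N ^ (r + 1 + 2) * Nat.factorial (d + 1)))
        = (4 * N) * (4 ^ r * (N ^ (r + 2) * ((d + 2) * Nat.factorial (d + 1)))) := by ring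
      _ = (4 * N) * (4 ^ r * (N ^ (r + 2) * Nat.factorial (d + 2))) := by rw [hfac]
      _ ≤ (4 * N) * (3 ^ r * (Nat.factorial N * Nat.factorial (r + 2))) :=
          Nat.mul_le_mul_left _ ih'
      _ ≤ (3 * ((r + 3) * (d + 2))) * (3 ^ r * (Nat.factorial N * Nat.factorial (r + 2))) :=
          Nat.mul_le_mul_right _ key
      _ = (d + 2) * (3 ^ (r + 1) * (Nat.factorial N * ((r + 3) * Nat.factorial (r + 2)))) := by
          ring
      _ = (d + 2) * (3 ^ (r + 1) * (Nat.factorial N * Nat.factorial (r + 3))) := by rw [hfac2]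

lemma Hn_top (hn : 3 ≤ n) :
    4 ^ (n - 3) * n ^ n ≤ 3 ^ (n - 3) * (Nat.factorial n * Nat.factorial n) := by
  obtain ⟨m, rfl⟩ : ∃ m, n = m + 3 := ⟨n - 3, by omega⟩
  have h := H1 (m + 3) m (by omega)
  have e1 : (m + 3) - (m + 2) = 1 := by omega
  rw [e1] at h
  have e2 : (m + 3) - 3 = m := by omega
  rw [e2]
  have h' := Nat.mul_le_mul_left (m + 3) h
  have hfac : Nat.factorial (m + 3) = (m + 3) * Nat.factorial (m + 2) := Nat.factorial_succ _
  calc 4 ^ m * (m + 3) ^ (m + 3)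
      = (m + 3) * (4 ^ m * ((m + 3) ^ (m + 2) * Nat.factorial 1)) := by
        rw [Nat.factorial_one]; ring
    _ ≤ (m + 3) * (3 ^ m * (Nat.factorial (m + 3) * Nat.factorial (m + 2))) := h'
    _ = 3 ^ m * (Nat.factorial (m + 3) * ((m + 3) * Nat.factorial (m + 2))) := by ring
    _ = 3 ^ m * (Nat.factorial (m + 3) * Nat.factorial (m + 3)) := by rw [← hfac]

lemma Hnat (hn : 3 ≤ n) (hs2 : 2 ≤ s) (hsn : s ≤ n) :
    3 * (4 ^ (s - 2) * (n ^ s * Nat.factorial (n - s))) ≤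
      4 * (3 ^ (s - 2) * (Nat.factorial n * Nat.factorial s)) := by
  obtain ⟨r, rfl⟩ : ∃ r, s = r + 2 := ⟨s - 2, by omega⟩
  have e : r + 2 - 2 = r := by omega
  rw [e]
  rcases Nat.lt_or_ge (r + 2) n with hlt | hge
  · have h := H1 n r (by omega)
    calc 3 * (4 ^ r * (n ^ (r + 2) * Nat.factorial (n - (r + 2))))
        ≤ 3 * (3 ^ r * (Nat.factorial n * Nat.factorial (r + 2))) := Nat.mul_le_mul_left _ h
      _ ≤ 4 * (3 ^ r * (Nat.factorial n * Nat.factorial (r + 2))) :=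
          Nat.mul_le_mul_right _ (by omega)
  · have heq : r + 2 = n := by omega
    subst heq
    have h := Hn_top (n := r + 2) (by omega)
    have e2 : r + 2 - 3 = r - 1 := by omega
    rw [e2] at h
    have e3 : r + 2 - (r + 2) = 0 := by omega
    rw [e3, Nat.factorial_zero]
    obtain ⟨r', rfl⟩ : ∃ r', r = r' + 1 := ⟨r - 1, by omega⟩
    have e4 : r' + 1 - 1 = r' := by omega
    rw [e4] at h
    calc 3 * (4 ^ (r' + 1) * ((r' + 3) ^ (r' + 3) * 1))
        = 12 * (4 ^ r' * (r' + 3) ^ (r' + 3)) := by ring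
      _ ≤ 12 * (3 ^ r' * (Nat.factorial (r' + 3) * Nat.factorial (r' + 3))) := by
          apply Nat.mul_le_mul_left
          convert h using 2 <;> ring_nf
      _ = 4 * (3 ^ (r' + 1) * (Nat.factorial (r' + 3) * Nat.factorial (r' + 3))) := by ring

lemma termK (hn : 3 ≤ n) {s : ℕ} (hs1 : 1 ≤ s) (hsn : s ≤ n) {κ : ℕ} :
    3 * n * ((Nat.factorial n * n ^ (s - 1) * Nat.factorial (n - s) * (s - 1)) *
        (Nat.factorial n ^ (κ + 2 - 1) * n.choose s * Nat.factorial (n - s) ^ (κ + 2 - 1))) *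
      4 ^ (s - 2) ≤
    4 * (s - 1) * 3 ^ (s - 2) * Nat.factorial n ^ (2 * (κ + 2)) := by
  rcases Nat.lt_or_ge s 2 with hs | hs
  · have : s = 1 := by omega
    subst this
    simp
  obtain ⟨r, rfl⟩ : ∃ r, s = r + 2 := ⟨s - 2, by omega⟩
  have e1 : r + 2 - 1 = r + 1 := by omega
  have e2 : r + 2 - 2 = r := by omega
  have e3 : κ + 2 - 1 = κ + 1 := by omega
  rw [e1, e2, e3]
  have hG : Nat.factorial (n - (r + 2)) ≤ Nat.factorial n := Nat.factorial_le (by omega)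
  have hH := Hnat hn (s := r + 2) (by omega) hsn
  rw [e2] at hH
  have hC : n.choose (r + 2) * Nat.factorial (r + 2) * Nat.factorial (n - (r + 2)) =
      Nat.factorial n := Nat.choose_mul_factorial_mul_factorial hsn
  calc 3 * n * ((Nat.factorial n * n ^ (r + 1) * Nat.factorial (n - (r + 2)) * (r + 1)) *
        (Nat.factorial n ^ (κ + 1) * n.choose (r + 2) * Nat.factorial (n - (r + 2)) ^ (κ + 1))) *
      4 ^ r
      = ((r + 1) * n.choose (r + 2) * Nat.factorial n ^ (κ + 2) *
          Nat.factorial (n - (r + 2)) ^ (κ + 1)) *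
        (3 * (4 ^ r * (n ^ (r + 2) * Nat.factorial (n - (r + 2))))) := by ring
    _ ≤ ((r + 1) * n.choose (r + 2) * Nat.factorial n ^ (κ + 2) *
          Nat.factorial (n - (r + 2)) ^ (κ + 1)) *
        (4 * (3 ^ r * (Nat.factorial n * Nat.factorial (r + 2)))) :=
        Nat.mul_le_mul_left _ hH
    _ = (4 * (r + 1) * 3 ^ r * Nat.factorial n ^ (κ + 3) * Nat.factorial (n - (r + 2)) ^ κ) *
        (n.choose (r + 2) * Nat.factorial (r + 2) * Nat.factorial (n - (r + 2))) := by ring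
    _ = (4 * (r + 1) * 3 ^ r * Nat.factorial n ^ (κ + 3) * Nat.factorial (n - (r + 2)) ^ κ) *
        Nat.factorial n := by rw [hC]
    _ ≤ (4 * (r + 1) * 3 ^ r * Nat.factorial n ^ (κ + 3) * Nat.factorial n ^ κ) *
        Nat.factorial n := by
        apply Nat.mul_le_mul_right
        apply Nat.mul_le_mul_left
        exact Nat.pow_le_pow_left hG κ
    _ = 4 * (r + 1) * 3 ^ r * Nat.factorial n ^ (2 * (κ + 2)) := by
        rw [show 2 * (κ + 2) = (κ + 3) + κ + 1 by omega]
        rw [pow_add, pow_add]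
        ring

lemma sum_geo : ∀ m : ℕ, 1 ≤ m →
    ∑ s ∈ Finset.Icc 1 m, (((s : ℝ) - 1) * (3 / 4 : ℝ) ^ (s - 2)) ≤
      16 - (4 * (m : ℝ) + 12) * (3 / 4) ^ (m - 1) := by
  intro m
  induction m with
  | zero => omega
  | succ m ih =>
    intro _
    rcases Nat.eq_zero_or_pos m with h1 | h1
    · subst h1
      norm_num
    have hm : 1 ≤ m := by omega
    have ih' := ih hm
    rw [Finset.sum_Icc_succ_top (by omega : 1 ≤ m + 1)]
    have e1 : m + 1 - 2 = m - 1 := by omega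
    have e2 : m + 1 - 1 = m := by omega
    rw [e1, e2]
    have e3 : (3 / 4 : ℝ) ^ m = (3 / 4) * (3 / 4) ^ (m - 1) := by
      rw [← pow_succ']
      congr 1
      omega
    have hpow : (0:ℝ) ≤ (3 / 4 : ℝ) ^ (m - 1) := by positivity
    push_cast
    rw [e3]
    push_cast at ih'
    nlinarith [ih']

lemma sum_geo_le (m : ℕ) :
    ∑ s ∈ Finset.Icc 1 m, (((s : ℝ) - 1) * (3 / 4 : ℝ) ^ (s - 2)) ≤ 16 := by
  rcases Nat.lt_or_ge m 1 with h | h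
  · interval_cases m
    simp
  refine (sum_geo m h).trans ?_
  have : (0:ℝ) ≤ (4 * (m : ℝ) + 12) * (3 / 4) ^ (m - 1) := by positivity
  linarith

lemma cheb (hk : 2 ≤ k) (hn : 3 ≤ n) {ε : ℝ} (hε : 0 < ε) :
    (Nat.card {ι : (Fin k → Fin n) → Fin n //
        ε * ((Nat.factorial n : ℝ) ^ k / (n : ℝ) ^ n)
          < |(rainbowCount n k ι : ℝ) - (Nat.factorial n : ℝ) ^ k / (n : ℝ) ^ n|} : ℝ)
      / (n : ℝ) ^ (n ^ k) ≤ 22 / (ε ^ 2 * n) := by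
  classical
  have hk0 : 0 < k := by omega
  obtain ⟨κ, rfl⟩ : ∃ κ, k = κ + 2 := ⟨k - 2, by omega⟩
  set k := κ + 2 with hkdef
  have hnR : (0:ℝ) < (n:ℝ) := by
    have : (0:ℕ) < n := by omega
    exact_mod_cast this
  have hfacR : (0:ℝ) < (Nat.factorial n : ℝ) := by
    exact_mod_cast Nat.factorial_pos n
  set μ : ℝ := (Nat.factorial n : ℝ) ^ k / (n : ℝ) ^ n with hμ
  have hμpos : 0 < μ := div_pos (pow_pos hfacR _) (pow_pos hnR _)
  set X : ((Fin k → Fin n) → Fin n) → ℝ := fun ι => (rainbowCount n k ι : ℝ) with hX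
  set Bad := Finset.univ.filter
    (fun ι : (Fin k → Fin n) → Fin n => ε * μ < |X ι - μ|) with hBad
  have hcardBad : (Nat.card {ι : (Fin k → Fin n) → Fin n //
      ε * ((Nat.factorial n : ℝ) ^ k / (n : ℝ) ^ n)
        < |(rainbowCount n k ι : ℝ) - (Nat.factorial n : ℝ) ^ k / (n : ℝ) ^ n|} : ℝ)
      = (Bad.card : ℝ) := by
    congr 1
    rw [Nat.card_eq_fintype_card, Fintype.card_subtype]
  rw [hcardBad]
  -- exponent bookkeeping
  have h2n : 2 * n ≤ n ^ k := by
    have h1 : n ^ 2 ≤ n ^ k := Nat.pow_le_pow_right (by omega) (by omega)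
    have h2 : 2 * n ≤ n ^ 2 := by nlinarith
    omega
  have hpow1 : (n:ℝ) ^ (n ^ k) = (n:ℝ) ^ (n ^ k - n) * (n:ℝ) ^ n := by
    rw [← pow_add]
    congr 1
    omega
  have hpow2 : (n:ℝ) ^ (n ^ k) = (n:ℝ) ^ (n ^ k - 2 * n) * ((n:ℝ) ^ n) ^ 2 := by
    rw [← pow_mul, ← pow_add]
    congr 1
    omega
  set Ncard : ℝ := (n:ℝ) ^ (n ^ k) with hNcard
  -- the mean
  have hmean : ∑ ι : (Fin k → Fin n) → Fin n, X ι = Ncard * μ := by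
    have h := sum_rainbow (n := n) (k := k) hk0
    have hc : ((∑ ι : (Fin k → Fin n) → Fin n, rainbowCount n k ι : ℕ) : ℝ)
        = ∑ ι : (Fin k → Fin n) → Fin n, X ι := by push_cast; rfl
    rw [h] at hc
    push_cast at hc
    rw [← hc, hpow1, hμ]
    field_simp
  -- second moment
  set S : ℕ := ∑ s ∈ Finset.Icc 1 n,
      (Nat.factorial n * n ^ (s - 1) * Nat.factorial (n - s) * (s - 1)) *
      (Nat.factorial n ^ (k - 1) * n.choose s * Nat.factorial (n - s) ^ (k - 1)) with hS
  have hsq : ∑ ι : (Fin k → Fin n) → Fin n, (X ι) ^ 2 ≤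
      (n:ℝ) ^ (n ^ k - 2 * n) * ((Nat.factorial n : ℝ) ^ (2 * k) + (S : ℝ)) := by
    have h1 := (sum_rainbow_sq_le (n := n) (k := k) hk0).trans (pair_sum_le (by omega) (by omega))
    have hc : ((∑ ι : (Fin k → Fin n) → Fin n, (rainbowCount n k ι) ^ 2 : ℕ) : ℝ)
        = ∑ ι : (Fin k → Fin n) → Fin n, (X ι) ^ 2 := by push_cast; rfl
    calc ∑ ι : (Fin k → Fin n) → Fin n, (X ι) ^ 2
        = ((∑ ι : (Fin k → Fin n) → Fin n, (rainbowCount n k ι) ^ 2 : ℕ) : ℝ) := hc.symm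
      _ ≤ ((n ^ (n ^ k - 2 * n) * (Nat.factorial n ^ (2 * k) + S) : ℕ) : ℝ) := by
          exact_mod_cast h1
      _ = (n:ℝ) ^ (n ^ k - 2 * n) * ((Nat.factorial n : ℝ) ^ (2 * k) + (S : ℝ)) := by
          push_cast
          ring
  -- Chebyshev
  have hvar : (Bad.card : ℝ) * (ε * μ) ^ 2 ≤
      ∑ ι : (Fin k → Fin n) → Fin n, (X ι - μ) ^ 2 := by
    calc (Bad.card : ℝ) * (ε * μ) ^ 2 = ∑ _ι ∈ Bad, (ε * μ) ^ 2 := by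
          rw [Finset.sum_const, nsmul_eq_mul]
      _ ≤ ∑ ι ∈ Bad, (X ι - μ) ^ 2 := by
          apply Finset.sum_le_sum
          intro ι hι
          rw [hBad, Finset.mem_filter] at hι
          have h1 : 0 ≤ ε * μ := le_of_lt (mul_pos hε hμpos)
          calc (ε * μ) ^ 2 ≤ |X ι - μ| ^ 2 := by
                apply pow_le_pow_left₀ h1 (le_of_lt hι.2)
            _ = (X ι - μ) ^ 2 := sq_abs _
      _ ≤ ∑ ι : (Fin k → Fin n) → Fin n, (X ι - μ) ^ 2 := by
          apply Finset.sum_le_sum_of_subset_of_nonneg (Finset.subset_univ _)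
          intro ι _ _
          positivity
  have hexpand : ∑ ι : (Fin k → Fin n) → Fin n, (X ι - μ) ^ 2 =
      (∑ ι : (Fin k → Fin n) → Fin n, (X ι) ^ 2) - Ncard * μ ^ 2 := by
    have h1 : ∀ ι : (Fin k → Fin n) → Fin n, (X ι - μ) ^ 2 =
        (X ι) ^ 2 - 2 * μ * X ι + μ ^ 2 := by intro ι; ring
    rw [Finset.sum_congr rfl (fun ι _ => h1 ι), Finset.sum_add_distrib,
      Finset.sum_sub_distrib, ← Finset.mul_sum, hmean, Finset.sum_const,
      Finset.card_univ, nsmul_eq_mul]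
    have hcardF : (Fintype.card ((Fin k → Fin n) → Fin n) : ℝ) = Ncard := by
      rw [Fintype.card_fun, Fintype.card_fun, Fintype.card_fin, Fintype.card_fin]
      push_cast
      rfl
    rw [hcardF]
    ring
  have hNμ2 : Ncard * μ ^ 2 = (n:ℝ) ^ (n ^ k - 2 * n) * (Nat.factorial n : ℝ) ^ (2 * k) := by
    have hf : ((Nat.factorial n:ℝ)^k)^2 = (Nat.factorial n:ℝ)^(2*k) := by
      rw [← pow_mul, mul_comm]
    rw [hpow2, hμ, div_pow, hf]
    field_simp
  -- the per-term analytic bound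
  have hterm : (S : ℝ) ≤ (Nat.factorial n : ℝ) ^ (2 * k) * (64 / (3 * n)) := by
    have hcast : (S : ℝ) = ∑ s ∈ Finset.Icc 1 n,
        (((Nat.factorial n * n ^ (s - 1) * Nat.factorial (n - s) * (s - 1)) *
        (Nat.factorial n ^ (k - 1) * n.choose s * Nat.factorial (n - s) ^ (k - 1)) : ℕ) : ℝ) := by
      rw [hS]
      push_cast
      exact Finset.sum_congr rfl fun x _ => by ring
    rw [hcast]
    have hptwise : ∀ s ∈ Finset.Icc 1 n,
        (((Nat.factorial n * n ^ (s - 1) * Nat.factorial (n - s) * (s - 1)) *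
        (Nat.factorial n ^ (k - 1) * n.choose s * Nat.factorial (n - s) ^ (k - 1)) : ℕ) : ℝ) ≤
        (Nat.factorial n : ℝ) ^ (2 * k) * (4 / (3 * n)) *
          (((s:ℝ) - 1) * (3 / 4) ^ (s - 2)) := by
      intro s hs
      rw [Finset.mem_Icc] at hs
      have hK := termK (n := n) hn hs.1 hs.2 (κ := κ)
      have hKR : 3 * (n:ℝ) * (((Nat.factorial n * n ^ (s - 1) * Nat.factorial (n - s) * (s - 1)) *
          (Nat.factorial n ^ (k - 1) * n.choose s * Nat.factorial (n - s) ^ (k - 1)) : ℕ) : ℝ) *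
          (4:ℝ) ^ (s - 2) ≤
          4 * ((s:ℝ) - 1) * (3:ℝ) ^ (s - 2) * (Nat.factorial n : ℝ) ^ (2 * k) := by
        have := hK
        have hc : ((s - 1 : ℕ) : ℝ) = (s:ℝ) - 1 := by
          have : 1 ≤ s := hs.1
          push_cast [this]
          ring
        calc 3 * (n:ℝ) * (((Nat.factorial n * n ^ (s - 1) * Nat.factorial (n - s) * (s - 1)) *
            (Nat.factorial n ^ (k - 1) * n.choose s * Nat.factorial (n - s) ^ (k - 1)) : ℕ) : ℝ) *
            (4:ℝ) ^ (s - 2)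
            = ((3 * n * ((Nat.factorial n * n ^ (s - 1) * Nat.factorial (n - s) * (s - 1)) *
              (Nat.factorial n ^ (k - 1) * n.choose s * Nat.factorial (n - s) ^ (k - 1))) *
              4 ^ (s - 2) : ℕ) : ℝ) := by push_cast; ring
          _ ≤ ((4 * (s - 1) * 3 ^ (s - 2) * Nat.factorial n ^ (2 * (κ + 2)) : ℕ) : ℝ) := by
              exact_mod_cast hK
          _ = 4 * ((s:ℝ) - 1) * (3:ℝ) ^ (s - 2) * (Nat.factorial n : ℝ) ^ (2 * k) := by
              push_cast [hc, hkdef]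
              ring_nf
      -- divide by 3 * n * 4^(s-2)
      have h4pos : (0:ℝ) < (4:ℝ) ^ (s - 2) := by positivity
      have hrhs : (Nat.factorial n : ℝ) ^ (2 * k) * (4 / (3 * n)) *
          (((s:ℝ) - 1) * ((3:ℝ) ^ (s - 2) / (4:ℝ) ^ (s - 2))) =
          (4 * ((s:ℝ) - 1) * (3:ℝ) ^ (s - 2) * (Nat.factorial n : ℝ) ^ (2 * k)) /
            (3 * (n:ℝ) * (4:ℝ) ^ (s - 2)) := by
        field_simp
      rw [div_pow, hrhs, le_div_iff₀ (by positivity)]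
      calc (((Nat.factorial n * n ^ (s - 1) * Nat.factorial (n - s) * (s - 1)) *
          (Nat.factorial n ^ (k - 1) * n.choose s * Nat.factorial (n - s) ^ (k - 1)) : ℕ) : ℝ) *
          (3 * (n:ℝ) * (4:ℝ) ^ (s - 2))
          = 3 * (n:ℝ) * (((Nat.factorial n * n ^ (s - 1) * Nat.factorial (n - s) * (s - 1)) *
            (Nat.factorial n ^ (k - 1) * n.choose s * Nat.factorial (n - s) ^ (k - 1)) : ℕ) : ℝ) *
            (4:ℝ) ^ (s - 2) := by ring
        _ ≤ 4 * ((s:ℝ) - 1) * (3:ℝ) ^ (s - 2) * (Nat.factorial n : ℝ) ^ (2 * k) := hKR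
    calc (∑ s ∈ Finset.Icc 1 n,
        (((Nat.factorial n * n ^ (s - 1) * Nat.factorial (n - s) * (s - 1)) *
        (Nat.factorial n ^ (k - 1) * n.choose s * Nat.factorial (n - s) ^ (k - 1)) : ℕ) : ℝ))
        ≤ ∑ s ∈ Finset.Icc 1 n, (Nat.factorial n : ℝ) ^ (2 * k) * (4 / (3 * n)) *
          (((s:ℝ) - 1) * (3 / 4) ^ (s - 2)) := Finset.sum_le_sum hptwise
      _ = (Nat.factorial n : ℝ) ^ (2 * k) * (4 / (3 * n)) *
          (∑ s ∈ Finset.Icc 1 n, (((s:ℝ) - 1) * (3 / 4) ^ (s - 2))) := by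
          rw [Finset.mul_sum]
      _ ≤ (Nat.factorial n : ℝ) ^ (2 * k) * (4 / (3 * n)) * 16 := by
          apply mul_le_mul_of_nonneg_left (sum_geo_le n)
          positivity
      _ = (Nat.factorial n : ℝ) ^ (2 * k) * (64 / (3 * n)) := by ring
  -- put everything together
  have hkey : (Bad.card : ℝ) * (ε * μ) ^ 2 ≤ Ncard * μ ^ 2 * (64 / (3 * n)) := by
    calc (Bad.card : ℝ) * (ε * μ) ^ 2
        ≤ ∑ ι : (Fin k → Fin n) → Fin n, (X ι - μ) ^ 2 := hvar
      _ = (∑ ι : (Fin k → Fin n) → Fin n, (X ι) ^ 2) - Ncard * μ ^ 2 := hexpand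
      _ ≤ (n:ℝ) ^ (n ^ k - 2 * n) * ((Nat.factorial n : ℝ) ^ (2 * k) + (S : ℝ))
            - Ncard * μ ^ 2 := by linarith [hsq]
      _ = (n:ℝ) ^ (n ^ k - 2 * n) * (S : ℝ) := by rw [hNμ2]; ring
      _ ≤ (n:ℝ) ^ (n ^ k - 2 * n) * ((Nat.factorial n : ℝ) ^ (2 * k) * (64 / (3 * n))) := by
          apply mul_le_mul_of_nonneg_left hterm
          positivity
      _ = Ncard * μ ^ 2 * (64 / (3 * n)) := by rw [hNμ2]; ring
  -- divide out
  have hNpos : (0:ℝ) < Ncard := by positivity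
  have hεn : (0:ℝ) < ε ^ 2 * n := by positivity
  rw [div_le_div_iff₀ hNpos hεn]
  have hμ2 : (0:ℝ) < μ ^ 2 := by positivity
  have h1 : (Bad.card : ℝ) * ε ^ 2 ≤ Ncard * (64 / (3 * n)) := by
    have h2 : (Bad.card : ℝ) * ε ^ 2 * μ ^ 2 ≤ Ncard * (64 / (3 * n)) * μ ^ 2 := by
      calc (Bad.card : ℝ) * ε ^ 2 * μ ^ 2 = (Bad.card : ℝ) * (ε * μ) ^ 2 := by ring
        _ ≤ Ncard * μ ^ 2 * (64 / (3 * n)) := hkey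
        _ = Ncard * (64 / (3 * n)) * μ ^ 2 := by ring
    exact le_of_mul_le_mul_right h2 hμ2
  calc (Bad.card : ℝ) * (ε ^ 2 * n) = ((Bad.card : ℝ) * ε ^ 2) * n := by ring
    _ ≤ (Ncard * (64 / (3 * n))) * n := by
        apply mul_le_mul_of_nonneg_right h1 (le_of_lt hnR)
    _ = Ncard * (64 / 3) := by field_simp
    _ ≤ 22 * Ncard := by nlinarith [hNpos]

end RB

/-- Let `X` be the number of rainbow perfect matchings of `K^{(n)}_{n,k}` (`k ≥ 2` fixed;
each edge colored independently and uniformly from `n` colors, i.e. the coloring is uniform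
among all `n^(n^k)` colorings). For every `ε > 0`,
`P(|X − (n!)^k/n^n| > ε·(n!)^k/n^n) → 0` as `n → ∞`; in particular w.h.p.
`X = (1+o(1))·(n!)^k/n^n`. -/
theorem rainbow_count_concentration (k : ℕ) (hk : 2 ≤ k) (ε : ℝ) (hε : 0 < ε) :
    Tendsto (fun n : ℕ =>
        (Nat.card {ι : (Fin k → Fin n) → Fin n //
            ε * ((Nat.factorial n : ℝ) ^ k / (n : ℝ) ^ n)
              < |(rainbowCount n k ι : ℝ) - (Nat.factorial n : ℝ) ^ k / (n : ℝ) ^ n|} : ℝ)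
          / (n : ℝ) ^ (n ^ k))
      atTop (nhds 0) := by
  have hub : ∀ᶠ n in atTop, (fun n : ℕ =>
      (Nat.card {ι : (Fin k → Fin n) → Fin n //
          ε * ((Nat.factorial n : ℝ) ^ k / (n : ℝ) ^ n)
            < |(rainbowCount n k ι : ℝ) - (Nat.factorial n : ℝ) ^ k / (n : ℝ) ^ n|} : ℝ)
        / (n : ℝ) ^ (n ^ k)) n ≤ 22 / (ε ^ 2 * n) := by
    rw [eventually_atTop]
    exact ⟨3, fun n hn => RB.cheb hk hn hε⟩
  have hlb : ∀ n : ℕ, 0 ≤ (fun n : ℕ =>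
      (Nat.card {ι : (Fin k → Fin n) → Fin n //
          ε * ((Nat.factorial n : ℝ) ^ k / (n : ℝ) ^ n)
            < |(rainbowCount n k ι : ℝ) - (Nat.factorial n : ℝ) ^ k / (n : ℝ) ^ n|} : ℝ)
        / (n : ℝ) ^ (n ^ k)) n := by
    intro n
    apply div_nonneg (Nat.cast_nonneg _)
    positivity
  have hg : Tendsto (fun n : ℕ => 22 / (ε ^ 2 * (n:ℝ))) atTop (nhds 0) := by
    apply Filter.Tendsto.div_atTop (tendsto_const_nhds)
    apply Filter.Tendsto.const_mul_atTop (by positivity : (0:ℝ) < ε ^ 2)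
    exact tendsto_natCast_atTop_atTop
  exact squeeze_zero' (Filter.Eventually.of_forall hlb) hub hg
end

section
/- For all sufficiently large n, ∑_{ℓ=⌈log n⌉}^{n-⌈log n⌉} (e^k/(ℓ·n^{k-2}))^ℓ ≤ c·n·(e^k/log n)^{log n} for some constant c, and hence this sum tends to 0 as n → ∞ (k ≥ 2 fixed). -/
open Filter

/-- For fixed `k ≥ 2`, for all sufficiently large `n`,
`∑_{ℓ=⌈log n⌉}^{n-⌈log n⌉} (e^k/(ℓ·n^{k-2}))^ℓ ≤ c·n·(e^k/log n)^{log n}` for some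
constant `c`, and hence this sum tends to `0` as `n → ∞`. -/
theorem middle_range_sum_small (k : ℕ) (hk : 2 ≤ k) :
    ∃ c : ℝ, 0 < c ∧
      (∀ᶠ n : ℕ in atTop,
        ∑ ℓ ∈ Finset.Icc ⌈Real.log n⌉₊ (n - ⌈Real.log n⌉₊),
            ((Real.exp 1) ^ k / ((ℓ : ℝ) * (n : ℝ) ^ (k - 2))) ^ ℓ
          ≤ c * n * ((Real.exp 1) ^ k / Real.log n) ^ (Real.log n)) ∧
      Tendsto (fun n : ℕ =>
          ∑ ℓ ∈ Finset.Icc ⌈Real.log n⌉₊ (n - ⌈Real.log n⌉₊),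
            ((Real.exp 1) ^ k / ((ℓ : ℝ) * (n : ℝ) ^ (k - 2))) ^ ℓ)
        atTop (nhds 0) := by
  have hlog : Tendsto (fun n : ℕ => Real.log n) atTop atTop :=
    Real.tendsto_log_atTop.comp tendsto_natCast_atTop_atTop
  have hloglog : Tendsto (fun n : ℕ => Real.log (Real.log n)) atTop atTop :=
    Real.tendsto_log_atTop.comp hlog
  have hek : (0:ℝ) < Real.exp 1 ^ k := pow_pos (Real.exp_pos 1) k
  have hnonneg : ∀ n : ℕ, 0 ≤ ∑ ℓ ∈ Finset.Icc ⌈Real.log n⌉₊ (n - ⌈Real.log n⌉₊),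
      ((Real.exp 1) ^ k / ((ℓ : ℝ) * (n : ℝ) ^ (k - 2))) ^ ℓ := fun n =>
    Finset.sum_nonneg fun ℓ _ => pow_nonneg (div_nonneg hek.le
      (mul_nonneg (Nat.cast_nonneg _) (pow_nonneg (Nat.cast_nonneg _) _))) _
  -- the key bound with c = 2
  have hbound : ∀ᶠ n : ℕ in atTop,
      ∑ ℓ ∈ Finset.Icc ⌈Real.log n⌉₊ (n - ⌈Real.log n⌉₊),
          ((Real.exp 1) ^ k / ((ℓ : ℝ) * (n : ℝ) ^ (k - 2))) ^ ℓ
        ≤ 2 * n * ((Real.exp 1) ^ k / Real.log n) ^ (Real.log n) := by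
    filter_upwards [hlog.eventually_ge_atTop (Real.exp 1 ^ k), eventually_ge_atTop 1]
      with n hln hn1
    set L := Real.log n with hLdef
    have hL : 0 < L := lt_of_lt_of_le hek hln
    have hB0 : 0 < Real.exp 1 ^ k / L := div_pos hek hL
    have hB1 : Real.exp 1 ^ k / L ≤ 1 := div_le_one_of_le₀ hln hL.le
    have hn1' : (1:ℝ) ≤ n := by exact_mod_cast hn1
    have hterm : ∀ ℓ ∈ Finset.Icc ⌈L⌉₊ (n - ⌈L⌉₊),
        ((Real.exp 1) ^ k / ((ℓ : ℝ) * (n : ℝ) ^ (k - 2))) ^ ℓ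
          ≤ (Real.exp 1 ^ k / L) ^ L := by
      intro ℓ hℓ
      have hℓL : L ≤ (ℓ:ℝ) := le_trans (Nat.le_ceil L)
        (by exact_mod_cast (Finset.mem_Icc.mp hℓ).1)
      have hℓ0 : (0:ℝ) < (ℓ:ℝ) := lt_of_lt_of_le hL hℓL
      have hpow1 : (1:ℝ) ≤ (n : ℝ) ^ (k - 2) := one_le_pow₀ hn1'
      have hden : L ≤ (ℓ:ℝ) * (n : ℝ) ^ (k - 2) :=
        le_trans hℓL (le_mul_of_one_le_right hℓ0.le hpow1)
      have h1 : (Real.exp 1) ^ k / ((ℓ : ℝ) * (n : ℝ) ^ (k - 2)) ≤ Real.exp 1 ^ k / L := by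
        gcongr
      calc ((Real.exp 1) ^ k / ((ℓ : ℝ) * (n : ℝ) ^ (k - 2))) ^ ℓ
          ≤ (Real.exp 1 ^ k / L) ^ ℓ := pow_le_pow_left₀ (by positivity) h1 ℓ
        _ = (Real.exp 1 ^ k / L) ^ (ℓ:ℝ) := (Real.rpow_natCast _ ℓ).symm
        _ ≤ (Real.exp 1 ^ k / L) ^ L := Real.rpow_le_rpow_of_exponent_ge hB0 hB1 hℓL
    have hcard : (Finset.Icc ⌈L⌉₊ (n - ⌈L⌉₊)).card ≤ n := by
      rw [Nat.card_Icc]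
      have h1 : 1 ≤ ⌈L⌉₊ := Nat.one_le_ceil_iff.mpr hL
      omega
    have hBL : 0 ≤ (Real.exp 1 ^ k / L) ^ L := Real.rpow_nonneg hB0.le L
    calc ∑ ℓ ∈ Finset.Icc ⌈L⌉₊ (n - ⌈L⌉₊),
          ((Real.exp 1) ^ k / ((ℓ : ℝ) * (n : ℝ) ^ (k - 2))) ^ ℓ
        ≤ (Finset.Icc ⌈L⌉₊ (n - ⌈L⌉₊)).card • ((Real.exp 1 ^ k / L) ^ L) :=
          Finset.sum_le_card_nsmul _ _ _ hterm
      _ = ((Finset.Icc ⌈L⌉₊ (n - ⌈L⌉₊)).card : ℝ) * ((Real.exp 1 ^ k / L) ^ L) :=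
          nsmul_eq_mul _ _
      _ ≤ (n:ℝ) * ((Real.exp 1 ^ k / L) ^ L) := by
          gcongr
      _ ≤ 2 * n * ((Real.exp 1 ^ k / L) ^ L) := by nlinarith
  -- the bounding quantity is eventually ≤ 2/n
  have hsmall : ∀ᶠ n : ℕ in atTop,
      2 * (n:ℝ) * ((Real.exp 1) ^ k / Real.log n) ^ (Real.log n) ≤ 2 / n := by
    filter_upwards [hlog.eventually_ge_atTop 1, hloglog.eventually_ge_atTop ((k:ℝ) + 2),
      eventually_ge_atTop 1] with n hL1 hLL hn1
    set L := Real.log n with hLdef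
    have hL : 0 < L := lt_of_lt_of_le one_pos hL1
    have hB0 : 0 < Real.exp 1 ^ k / L := div_pos hek hL
    have hnpos : (0:ℝ) < n := by exact_mod_cast hn1
    have hexpL : Real.exp L = n := Real.exp_log hnpos
    have hlogB : Real.log (Real.exp 1 ^ k / L) = (k:ℝ) - Real.log L := by
      rw [Real.log_div (ne_of_gt hek) (ne_of_gt hL), Real.log_pow, Real.log_exp, mul_one]
    have hrw : ((Real.exp 1) ^ k / L) ^ L = Real.exp (((k:ℝ) - Real.log L) * L) := by
      rw [Real.rpow_def_of_pos hB0, hlogB]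
    rw [hrw]
    have hexp : Real.exp (((k:ℝ) - Real.log L) * L) ≤ Real.exp (-(L + L)) := by
      apply Real.exp_le_exp.mpr
      nlinarith
    have hval : Real.exp (-(L + L)) = ((n:ℝ) * n)⁻¹ := by
      rw [Real.exp_neg, Real.exp_add, hexpL]
    calc 2 * (n:ℝ) * Real.exp (((k:ℝ) - Real.log L) * L)
        ≤ 2 * (n:ℝ) * Real.exp (-(L + L)) := by nlinarith [Real.exp_pos (-(L+L))]
      _ = 2 / n := by rw [hval]; field_simp
  have h2n : Tendsto (fun n : ℕ => (2:ℝ) / n) atTop (nhds 0) :=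
    tendsto_const_div_atTop_nhds_zero_nat 2
  refine ⟨2, by norm_num, hbound, ?_⟩
  refine tendsto_of_tendsto_of_tendsto_of_le_of_le' tendsto_const_nhds h2n
    (Eventually.of_forall hnonneg) ?_
  filter_upwards [hbound, hsmall] with n h1 h2
  exact le_trans h1 h2
end

section
/- Lemma (rainbow max-to-median propagation): Suppose w: V_k × C → ℝ≥0 where V_k = U_1 × ... × U_k with |U_i| = n, |C| = n. Define ψ_0 = max_{v,c} w(v,c), and suppose B ≥ 0 satisfies ψ_0 ≥ 2^k·B. Assume: (i) for each partial tuple v missing coordinate j and each color c with max over completions ≥ B, at least n/2 completions w achieve at least half the max; (ii) for each full tuple v with max_c w(v,c) ≥ B, at least n/2 colors c achieve w(v,c) ≥ (1/2)·max_c w(v,c). Then |{(v,c) : w(v,c) ≥ ψ_0/2^{k+1}}| ≥ n^{k+1}/2^{k+1}. -/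
/-- Rainbow max-to-median propagation (Lemma 4.2 of the paper). Let
`w : V_k × C → ℝ≥0` where `V_k = U_1 × ⋯ × U_k` with `|U_i| = n` (modelled as
`Fin k → Fin n`) and `|C| = n`. Let `ψ₀ = max_{v,c} w(v,c)` and suppose `ψ₀ ≥ 2^k·B`.
Assume: (i) for each coordinate `j`, each tuple `v` and color `c`, if the maximum `m`
of `w` over completions of `v` at coordinate `j` satisfies `m ≥ B`, then at least `n/2`
completions achieve at least `m/2`; (ii) for each full tuple `v`, if `m = max_c w(v,c) ≥ B`
then at least `n/2` colors `c` achieve `w(v,c) ≥ m/2`. Then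
`|{(v,c) : w(v,c) ≥ ψ₀/2^{k+1}}| ≥ n^{k+1}/2^{k+1}`. -/
theorem rainbow_max_to_median (n k : ℕ) (hn : 0 < n) (hk : 1 ≤ k)
    (w : (Fin k → Fin n) → Fin n → ℝ) (hw : ∀ v c, 0 ≤ w v c)
    (B ψ₀ : ℝ) (hB : 0 ≤ B)
    (hψ₀ : IsGreatest {x : ℝ | ∃ v c, x = w v c} ψ₀)
    (hψ₀B : 2 ^ k * B ≤ ψ₀)
    (hi : ∀ (j : Fin k) (v : Fin k → Fin n) (c : Fin n) (m : ℝ),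
        IsGreatest {x : ℝ | ∃ u : Fin n, x = w (Function.update v j u) c} m → B ≤ m →
        (n : ℝ) / 2 ≤ (Nat.card {u : Fin n // m / 2 ≤ w (Function.update v j u) c} : ℝ))
    (hii : ∀ (v : Fin k → Fin n) (m : ℝ),
        IsGreatest {x : ℝ | ∃ c : Fin n, x = w v c} m → B ≤ m →
        (n : ℝ) / 2 ≤ (Nat.card {c : Fin n // m / 2 ≤ w v c} : ℝ)) :
    (n : ℝ) ^ (k + 1) / 2 ^ (k + 1)
      ≤ (Nat.card {p : (Fin k → Fin n) × Fin n // ψ₀ / 2 ^ (k + 1) ≤ w p.1 p.2} : ℝ) := by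
  classical
  haveI : Nonempty (Fin n) := ⟨⟨0, hn⟩⟩
  obtain ⟨⟨vs, cs, hvs⟩, hub⟩ := hψ₀
  have hBj : ∀ j : ℕ, j ≤ k → B ≤ ψ₀ / 2 ^ j := by
    intro j hj
    rw [le_div_iff₀ (by positivity)]
    calc B * 2 ^ j = 2 ^ j * B := mul_comm _ _
      _ ≤ 2 ^ k * B := by
          apply mul_le_mul_of_nonneg_right _ hB
          exact pow_le_pow_right₀ (by norm_num) hj
      _ ≤ ψ₀ := hψ₀B
  have key : ∀ j : ℕ, j ≤ k → ∃ S : Finset (Fin k → Fin n),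
      ((n : ℝ) / 2) ^ j ≤ (S.card : ℝ) ∧ (∀ v ∈ S, ψ₀ / 2 ^ j ≤ w v cs) ∧
      (∀ v ∈ S, ∀ i : Fin k, j ≤ (i : ℕ) → v i = vs i) := by
    intro j
    induction j with
    | zero =>
        intro _
        refine ⟨{vs}, by simp, ?_, ?_⟩
        · intro v hv
          simp only [Finset.mem_singleton] at hv
          subst hv
          simp [← hvs]
        · intro v hv i _
          simp only [Finset.mem_singleton] at hv
          subst hv; rfl
    | succ j ih =>
        intro hj1
        obtain ⟨S, hcard, hval, hfix⟩ := ih (Nat.le_of_succ_le hj1)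
        set jf : Fin k := ⟨j, hj1⟩ with hjf
        set m : (Fin k → Fin n) → ℝ := fun v =>
          (Finset.univ.image fun u => w (Function.update v jf u) cs).max'
            (Finset.Nonempty.image Finset.univ_nonempty _) with hm
        have hmg : ∀ v, IsGreatest
            {x : ℝ | ∃ u, x = w (Function.update v jf u) cs} (m v) := by
          intro v
          constructor
          · obtain ⟨u, _, hfu⟩ := Finset.mem_image.1 (Finset.max'_mem _
              (Finset.Nonempty.image Finset.univ_nonempty
                (fun u => w (Function.update v jf u) cs)))
            exact ⟨u, hfu.symm⟩
          · rintro x ⟨u, rfl⟩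
            simp only [hm]
            exact Finset.le_max' (Finset.univ.image fun u => w (Function.update v jf u) cs)
              _ (Finset.mem_image_of_mem (fun u => w (Function.update v jf u) cs)
                (Finset.mem_univ u))
        set good : (Fin k → Fin n) → Finset (Fin n) := fun v =>
          Finset.univ.filter fun u => m v / 2 ≤ w (Function.update v jf u) cs with hgooddef
        have hmb : ∀ v ∈ S, ψ₀ / 2 ^ j ≤ m v := by
          intro v hv
          have hmem : w v cs ∈ {x : ℝ | ∃ u, x = w (Function.update v jf u) cs} :=
            ⟨v jf, by rw [Function.update_eq_self]⟩
          exact le_trans (hval v hv) ((hmg v).2 hmem)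
        have hgoodcard : ∀ v ∈ S, (n : ℝ) / 2 ≤ ((good v).card : ℝ) := by
          intro v hv
          have := hi jf v cs (m v) (hmg v)
            (le_trans (hBj j (Nat.le_of_succ_le hj1)) (hmb v hv))
          rwa [Nat.card_eq_fintype_card, Fintype.card_subtype] at this
        have hgoodval : ∀ v ∈ S, ∀ u ∈ good v,
            ψ₀ / 2 ^ (j + 1) ≤ w (Function.update v jf u) cs := by
          intro v hv u hu
          have h1 : m v / 2 ≤ w (Function.update v jf u) cs :=
            (Finset.mem_filter.1 hu).2
          have h2 : ψ₀ / 2 ^ (j + 1) ≤ m v / 2 := by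
            have := hmb v hv
            rw [pow_succ, ← div_div]
            linarith
          linarith
        have hdisj : ∀ v ∈ S, ∀ v' ∈ S, v ≠ v' →
            Disjoint ((good v).image fun u => Function.update v jf u)
              ((good v').image fun u => Function.update v' jf u) := by
          intro v hv v' hv' hne
          simp only [Finset.disjoint_left]
          intro x hx hx'
          obtain ⟨u, _, hxu⟩ := Finset.mem_image.1 hx
          obtain ⟨u', _, hxu'⟩ := Finset.mem_image.1 hx'
          apply hne
          funext i
          by_cases hij : i = jf
          · subst hij
            rw [hfix v hv jf le_rfl, hfix v' hv' jf le_rfl]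
          · have e1 : x i = v i := by rw [← hxu, Function.update_of_ne hij]
            have e2 : x i = v' i := by rw [← hxu', Function.update_of_ne hij]
            rw [← e1, e2]
        refine ⟨S.biUnion (fun v => (good v).image fun u => Function.update v jf u),
          ?_, ?_, ?_⟩
        · have heach : ∀ v ∈ S,
              ((good v).image fun u => Function.update v jf u).card = (good v).card := by
            intro v _
            apply Finset.card_image_of_injective
            exact Function.update_injective v jf
          rw [Finset.card_biUnion hdisj, Finset.sum_congr rfl heach]
          push_cast
          calc ((n : ℝ) / 2) ^ (j + 1) = ((n : ℝ) / 2) ^ j * ((n : ℝ) / 2) := by ring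
            _ ≤ (S.card : ℝ) * ((n : ℝ) / 2) :=
                mul_le_mul_of_nonneg_right hcard (by positivity)
            _ = ∑ _v ∈ S, ((n : ℝ) / 2) := by
                rw [Finset.sum_const, nsmul_eq_mul]
            _ ≤ ∑ v ∈ S, ((good v).card : ℝ) := Finset.sum_le_sum hgoodcard
        · intro x hx
          obtain ⟨v, hv, hx2⟩ := Finset.mem_biUnion.1 hx
          obtain ⟨u, hu, hxu⟩ := Finset.mem_image.1 hx2
          rw [← hxu]
          exact hgoodval v hv u hu
        · intro x hx ii hii2
          obtain ⟨v, hv, hx2⟩ := Finset.mem_biUnion.1 hx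
          obtain ⟨u, _, hxu⟩ := Finset.mem_image.1 hx2
          have hij : ii ≠ jf := by
            intro h
            rw [h] at hii2
            simp only [hjf] at hii2
            omega
          rw [← hxu, Function.update_of_ne hij]
          exact hfix v hv ii (by omega)
  obtain ⟨S, hcard, hval, _⟩ := key k le_rfl
  -- now the color step
  set m : (Fin k → Fin n) → ℝ := fun v =>
    (Finset.univ.image fun c => w v c).max'
      (Finset.Nonempty.image Finset.univ_nonempty _) with hm
  have hmg : ∀ v, IsGreatest {x : ℝ | ∃ c, x = w v c} (m v) := by
    intro v
    constructor
    · obtain ⟨c, _, hfc⟩ := Finset.mem_image.1 (Finset.max'_mem _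
        (Finset.Nonempty.image Finset.univ_nonempty (fun c => w v c)))
      exact ⟨c, hfc.symm⟩
    · rintro x ⟨c, rfl⟩
      simp only [hm]
      exact Finset.le_max' (Finset.univ.image fun c => w v c) _
        (Finset.mem_image_of_mem (fun c => w v c) (Finset.mem_univ c))
  set good : (Fin k → Fin n) → Finset (Fin n) := fun v =>
    Finset.univ.filter fun c => m v / 2 ≤ w v c with hgooddef
  have hmb : ∀ v ∈ S, ψ₀ / 2 ^ k ≤ m v := by
    intro v hv
    exact le_trans (hval v hv) ((hmg v).2 ⟨cs, rfl⟩)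
  have hgoodcard : ∀ v ∈ S, (n : ℝ) / 2 ≤ ((good v).card : ℝ) := by
    intro v hv
    have := hii v (m v) (hmg v) (le_trans (hBj k le_rfl) (hmb v hv))
    rwa [Nat.card_eq_fintype_card, Fintype.card_subtype] at this
  have hgoodval : ∀ v ∈ S, ∀ c ∈ good v, ψ₀ / 2 ^ (k + 1) ≤ w v c := by
    intro v hv c hc
    have h1 : m v / 2 ≤ w v c := (Finset.mem_filter.1 hc).2
    have h2 : ψ₀ / 2 ^ (k + 1) ≤ m v / 2 := by
      have := hmb v hv
      rw [pow_succ, ← div_div]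
      linarith
    linarith
  set P : Finset ((Fin k → Fin n) × Fin n) :=
    S.biUnion (fun v => (good v).image fun c => (v, c)) with hP
  have hdisj : ∀ v ∈ S, ∀ v' ∈ S, v ≠ v' →
      Disjoint ((good v).image fun c => (v, c)) ((good v').image fun c => (v', c)) := by
    intro v hv v' hv' hne
    simp only [Finset.disjoint_left]
    intro x hx hx'
    obtain ⟨c, _, hxc⟩ := Finset.mem_image.1 hx
    obtain ⟨c', _, hxc'⟩ := Finset.mem_image.1 hx'
    apply hne
    rw [← hxc] at hxc'
    exact (congrArg Prod.fst hxc').symm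
  have hPcard : ((n : ℝ) / 2) ^ (k + 1) ≤ (P.card : ℝ) := by
    have heach : ∀ v ∈ S,
        ((good v).image fun c => (v, c)).card = (good v).card := by
      intro v _
      apply Finset.card_image_of_injective
      intro a b hab
      exact (Prod.ext_iff.1 hab).2
    rw [hP, Finset.card_biUnion hdisj, Finset.sum_congr rfl heach]
    push_cast
    calc ((n : ℝ) / 2) ^ (k + 1) = ((n : ℝ) / 2) ^ k * ((n : ℝ) / 2) := by ring
      _ ≤ (S.card : ℝ) * ((n : ℝ) / 2) :=
          mul_le_mul_of_nonneg_right hcard (by positivity)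
      _ = ∑ _v ∈ S, ((n : ℝ) / 2) := by rw [Finset.sum_const, nsmul_eq_mul]
      _ ≤ ∑ v ∈ S, ((good v).card : ℝ) := Finset.sum_le_sum hgoodcard
  have hsub : P ⊆ Finset.univ.filter fun p : (Fin k → Fin n) × Fin n =>
      ψ₀ / 2 ^ (k + 1) ≤ w p.1 p.2 := by
    intro p hp
    obtain ⟨v, hv, hp2⟩ := Finset.mem_biUnion.1 hp
    obtain ⟨c, hc, hpc⟩ := Finset.mem_image.1 hp2
    rw [Finset.mem_filter]
    refine ⟨Finset.mem_univ _, ?_⟩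
    rw [← hpc]
    exact hgoodval v hv c hc
  have hfin : Nat.card {p : (Fin k → Fin n) × Fin n // ψ₀ / 2 ^ (k + 1) ≤ w p.1 p.2}
      = (Finset.univ.filter fun p : (Fin k → Fin n) × Fin n =>
          ψ₀ / 2 ^ (k + 1) ≤ w p.1 p.2).card := by
    rw [Nat.card_eq_fintype_card, Fintype.card_subtype]
  rw [hfin]
  calc (n : ℝ) ^ (k + 1) / 2 ^ (k + 1) = ((n : ℝ) / 2) ^ (k + 1) := by
        rw [div_pow]
    _ ≤ (P.card : ℝ) := hPcard
    _ ≤ _ := by exact_mod_cast Finset.card_le_card hsub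
end
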